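/- Let P be a positive opetope, and let x⃗ and x⃗' be two consecutive maximal flags (x⃗' the successor of x⃗ in the flag order). Then the intersection of x⃗ and x⃗' (the vector with 0 at each level where they differ) is a punctured flag; moreover it is a high p-flag if sgn(x⃗) = +1 and a low p-flag if sgn(x⃗) = −1. -/
import Mathlib


open scoped Classical

structure PHg where
  Face : ℕ → Type
  fin : ∀ k, Finite (Face k)
  γ : ∀ k, Face (k+1) → Face k
  δ : ∀ k, Face (k+1) → Face k → Prop
  δ_total : ∀ k a, ∃ x, δ k a x
  δ0_fun : ∀ (a : Face 1) (x y : Face 0), δ 0 a x → δ 0 a y → x = y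
  bounded : ∃ n, ∀ k, n < k → IsEmpty (Face k)

abbrev PHg.FaceS (S : PHg) : Type := Σ k, S.Face k

/-- The codomain operation, viewed on faces of arbitrary dimension
(identity in dimension 0). -/
def gammaS (S : PHg) : S.FaceS → S.FaceS
  | ⟨0, x⟩ => ⟨0, x⟩
  | ⟨k+1, x⟩ => ⟨k, S.γ k x⟩

/-- `x ∈ δ(q)`. -/
def inDelta (S : PHg) (x q : S.FaceS) : Prop :=
  match q with
  | ⟨0, _⟩ => False
  | ⟨k+1, a⟩ => ∃ h : x.1 = k, S.δ k a (h ▸ x.2)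

/-- `x = γ(q)` (for `q` of positive dimension). -/
def inGammaS (S : PHg) (x q : S.FaceS) : Prop := 0 < q.1 ∧ gammaS S q = x

/-- `x ∈ ∂(q) = {γ(q)} ∪ δ(q)`. -/
def inBoundary (S : PHg) (x q : S.FaceS) : Prop := inGammaS S x q ∨ inDelta S x q

def covPlus (S : PHg) (a b : S.FaceS) : Prop :=
  ∃ α, inDelta S a α ∧ gammaS S α = b

/-- The upper order `<⁺`. -/
def ltPlus (S : PHg) : S.FaceS → S.FaceS → Prop := Relation.TransGen (covPlus S)

def lePlus (S : PHg) (a b : S.FaceS) : Prop := a = b ∨ ltPlus S a b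

def perpPlus (S : PHg) (a b : S.FaceS) : Prop := ltPlus S a b ∨ ltPlus S b a

def covMinus (S : PHg) (a b : S.FaceS) : Prop := 0 < a.1 ∧ inDelta S (gammaS S a) b

/-- The lower order `<⁻`. -/
def ltMinus (S : PHg) : S.FaceS → S.FaceS → Prop := Relation.TransGen (covMinus S)

def perpMinus (S : PHg) (a b : S.FaceS) : Prop := ltMinus S a b ∨ ltMinus S b a

/-- Iterated codomain `γ^{(k)}`. -/
def gammaIter (S : PHg) (k : ℕ) (p : S.FaceS) : S.FaceS := (gammaS S)^[p.1 - k] p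

/-- `X` is a `<⁺`-interval. -/
def IntervalPlus (S : PHg) (X : Set S.FaceS) : Prop :=
  X = ∅ ∨ ∃ x0 x1, lePlus S x0 x1 ∧ X = {x | lePlus S x0 x ∧ lePlus S x x1}

def hasDim (S : PHg) (n : ℕ) : Prop :=
  Nonempty (S.Face n) ∧ ∀ k, n < k → IsEmpty (S.Face k)

/-- A positive opetope: a nonempty positive hypergraph satisfying globularity,
strictness, disjointness, pencil linearity, and having at most one face outside
`δ(S_{k+1})` in each dimension. -/
structure IsOpetope (S : PHg) : Prop where
  ne : Nonempty (S.Face 0)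
  glob_gamma : ∀ a : S.FaceS, 2 ≤ a.1 →
    ({gammaS S (gammaS S a)} : Set S.FaceS) =
      {x | ∃ y, inDelta S y a ∧ gammaS S y = x} \ {x | ∃ y, inDelta S y a ∧ inDelta S x y}
  glob_delta : ∀ a : S.FaceS, 2 ≤ a.1 →
    {x | inDelta S x (gammaS S a)} =
      {x | ∃ y, inDelta S y a ∧ inDelta S x y} \ {x | ∃ y, inDelta S y a ∧ gammaS S y = x}
  strict : ∀ a, ¬ ltPlus S a a
  linear0 : ∀ a b : S.FaceS, a.1 = 0 → b.1 = 0 → a = b ∨ perpPlus S a b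
  disj : ∀ a b : S.FaceS, 0 < a.1 → ¬ (perpMinus S a b ∧ perpPlus S a b)
  pencil_gamma : ∀ x a b, inGammaS S x a → inGammaS S x b → a = b ∨ perpPlus S a b
  pencil_delta : ∀ x a b, inDelta S x a → inDelta S x b → a = b ∨ perpPlus S a b
  size_le_one : ∀ k (a b : S.Face k),
    (¬ ∃ α : S.Face (k+1), S.δ k α a) → (¬ ∃ α : S.Face (k+1), S.δ k α b) → a = b
/-- A restricted flag from dimension `m` down to dimension `l`,
encoded as a function `ℕ → S.FaceS` (entries outside `[l,m]` are irrelevant). -/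
def IsRFlag (S : PHg) (m l : ℕ) (F : ℕ → S.FaceS) : Prop :=
  (∀ i, l ≤ i → i ≤ m → (F i).1 = i) ∧
  (∀ i, l ≤ i → i < m → inBoundary S (F i) (F (i+1)))

/-- The pencil order `≺ₓ` on the pencil over `x`. -/
def pencilLt (S : PHg) (x a b : S.FaceS) : Prop :=
  (inGammaS S x b ∧ inDelta S x a) ∨
  (inDelta S x a ∧ inDelta S x b ∧ ltPlus S a b) ∨
  (inGammaS S x a ∧ inGammaS S x b ∧ ltPlus S b a)

/-- The sign of the flag segment `[F j, …, F l]`. -/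
noncomputable def sgnSeg (S : PHg) (l : ℕ) (F : ℕ → S.FaceS) : ℕ → ℤ
  | 0 => 1
  | j+1 => if l ≤ j ∧ inDelta S (F j) (F (j+1)) then -(sgnSeg S l F j) else sgnSeg S l F j

/-- The flag order `◁` on flags from dimension `m` down to `l`. -/
def flagLt (S : PHg) (l m : ℕ) (F G : ℕ → S.FaceS) : Prop :=
  ∃ k, l ≤ k ∧ k ≤ m ∧ (∀ i, l ≤ i → i < k → F i = G i) ∧ F k ≠ G k ∧
    ((k = 0 ∧ ltPlus S (G 0) (F 0)) ∨
     (0 < k ∧ sgnSeg S l F (k-1) = 1 ∧ pencilLt S (F (k-1)) (F k) (G k)) ∨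
     (0 < k ∧ sgnSeg S l F (k-1) = -1 ∧ pencilLt S (F (k-1)) (G k) (F k)))

/-- `i` is the low level `ll` of the flag `F` (with top dimension `n`). -/
def LowLevelT (S : PHg) (n : ℕ) (F : ℕ → S.FaceS) (i : ℕ) : Prop :=
  i + 2 ≤ n ∧ inDelta S (F (i+1)) (F (i+2)) ∧
    ∀ j, i < j → j + 2 ≤ n → ¬ inDelta S (F (j+1)) (F (j+2))

/-- Membership in `Flags[t / b]`, flags from top face `t` (dim `m`) to bottom face `b` (dim `l`). -/
def MemFlags (S : PHg) (l m : ℕ) (t b : S.FaceS) (F : ℕ → S.FaceS) : Prop :=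
  IsRFlag S m l F ∧ F m = t ∧ F l = b

def EqOnFl {α : Type*} (l m : ℕ) (F G : ℕ → α) : Prop :=
  ∀ i, l ≤ i → i ≤ m → F i = G i

/-- `G` is the successor of `F` in `Flags[t / b]` with respect to the flag order. -/
def SuccFl (S : PHg) (l m : ℕ) (t b : S.FaceS) (F G : ℕ → S.FaceS) : Prop :=
  MemFlags S l m t b F ∧ MemFlags S l m t b G ∧ flagLt S l m F G ∧
  ∀ H, MemFlags S l m t b H → flagLt S l m F H → (EqOnFl l m G H ∨ flagLt S l m G H)

section Dev
variable {S : PHg}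

lemma inDelta_dim {x q : S.FaceS} (h : inDelta S x q) : x.1 + 1 = q.1 := by
  obtain ⟨k, a⟩ := q
  cases k with
  | zero => exact absurd h (by simp [inDelta])
  | succ k => obtain ⟨h1, _⟩ := h; simp [h1]

lemma gammaS_dim {q : S.FaceS} (h : 0 < q.1) : (gammaS S q).1 + 1 = q.1 := by
  obtain ⟨k, a⟩ := q
  cases k with
  | zero => simp at h
  | succ k => simp [gammaS]

lemma inGammaS_dim {x q : S.FaceS} (h : inGammaS S x q) : x.1 + 1 = q.1 := by
  obtain ⟨h0, h1⟩ := h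
  rw [← h1]; exact gammaS_dim h0

lemma inBoundary_dim {x q : S.FaceS} (h : inBoundary S x q) : x.1 + 1 = q.1 :=
  h.elim inGammaS_dim inDelta_dim

lemma covPlus_dim {a b : S.FaceS} (h : covPlus S a b) : a.1 = b.1 := by
  obtain ⟨α, h1, h2⟩ := h
  have d1 := inDelta_dim h1
  have : 0 < α.1 := by omega
  have d2 := gammaS_dim this
  rw [h2] at d2; omega

lemma ltPlus_dim {a b : S.FaceS} (h : ltPlus S a b) : a.1 = b.1 := by
  induction h with
  | single h => exact covPlus_dim h
  | tail _ h ih => exact ih.trans (covPlus_dim h)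

lemma ltPlus_trans {a b c : S.FaceS} (h1 : ltPlus S a b) (h2 : ltPlus S b c) :
    ltPlus S a c := Relation.TransGen.trans h1 h2

lemma ltPlus_asymm (hS : IsOpetope S) {a b : S.FaceS} (h1 : ltPlus S a b)
    (h2 : ltPlus S b a) : False :=
  hS.strict a (ltPlus_trans h1 h2)

/-- A face cannot be both the codomain and in the domain of the same face. -/
lemma not_inGammaS_and_inDelta (hS : IsOpetope S) {x q : S.FaceS}
    (hg : inGammaS S x q) (hd : inDelta S x q) : False := by
  have : covPlus S x x := ⟨q, hd, hg.2⟩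
  exact hS.strict x (Relation.TransGen.single this)

lemma pencilLt_asymm (hS : IsOpetope S) {x a b : S.FaceS}
    (h1 : pencilLt S x a b) (h2 : pencilLt S x b a) : False := by
  rcases h1 with ⟨A1, A2⟩ | ⟨A1, A2, A3⟩ | ⟨A1, A2, A3⟩ <;>
    rcases h2 with ⟨B1, B2⟩ | ⟨B1, B2, B3⟩ | ⟨B1, B2, B3⟩
  · exact not_inGammaS_and_inDelta hS B1 A2
  · exact not_inGammaS_and_inDelta hS A1 B1
  · exact not_inGammaS_and_inDelta hS B2 A2
  · exact not_inGammaS_and_inDelta hS B1 A1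
  · exact ltPlus_asymm hS A3 B3
  · exact not_inGammaS_and_inDelta hS B1 A2
  · exact not_inGammaS_and_inDelta hS A2 B2
  · exact not_inGammaS_and_inDelta hS A2 B1
  · exact ltPlus_asymm hS A3 B3

lemma pencilLt_irrefl (hS : IsOpetope S) {x a : S.FaceS} (h : pencilLt S x a a) : False :=
  pencilLt_asymm hS h h

/-- Trichotomy on a pencil. -/
lemma pencil_tricho (hS : IsOpetope S) {x a b : S.FaceS}
    (ha : inBoundary S x a) (hb : inBoundary S x b) (hne : a ≠ b) :
    pencilLt S x a b ∨ pencilLt S x b a := by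
  rcases ha with hga | hda <;> rcases hb with hgb | hdb
  · rcases hS.pencil_gamma x a b hga hgb with h | h | h
    · exact absurd h hne
    · exact Or.inr (Or.inr (Or.inr ⟨hgb, hga, h⟩))
    · exact Or.inl (Or.inr (Or.inr ⟨hga, hgb, h⟩))
  · exact Or.inr (Or.inl ⟨hga, hdb⟩)
  · exact Or.inl (Or.inl ⟨hgb, hda⟩)
  · rcases hS.pencil_delta x a b hda hdb with h | h | h
    · exact absurd h hne
    · exact Or.inl (Or.inr (Or.inl ⟨hda, hdb, h⟩))
    · exact Or.inr (Or.inr (Or.inl ⟨hdb, hda, h⟩))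

end Dev

section Dev2
variable {S : PHg}

lemma faceS_finite (S : PHg) : Finite S.FaceS := by
  obtain ⟨N, hN⟩ := S.bounded
  haveI := S.fin
  have hsurj : Function.Surjective
      (fun p : Σ k : Fin (N+1), S.Face k => (⟨p.1.1, p.2⟩ : S.FaceS)) := by
    intro p
    by_cases h : p.1 ≤ N
    · exact ⟨⟨⟨p.1, by omega⟩, p.2⟩, rfl⟩
    · exact ((hN p.1 (by omega)).false p.2).elim
  exact Finite.of_surjective _ hsurj

lemma wf_up (S : PHg) (hS : IsOpetope S) :
    WellFounded (fun a b : S.FaceS => ltPlus S b a) := by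
  haveI := faceS_finite S
  haveI : IsTrans S.FaceS (fun a b : S.FaceS => ltPlus S b a) :=
    ⟨fun _ _ _ h1 h2 => ltPlus_trans h2 h1⟩
  haveI : IsIrrefl S.FaceS (fun a b : S.FaceS => ltPlus S b a) := ⟨fun a h => hS.strict a h⟩
  exact Finite.wellFounded_of_trans_of_irrefl _

/-- `x` is in the image of no δ. -/
def nonDelta (S : PHg) (x : S.FaceS) : Prop := ∀ q, ¬ inDelta S x q

lemma eq_of_nonDelta (hS : IsOpetope S) {v w : S.FaceS} (hdim : v.1 = w.1)
    (hv : nonDelta S v) (hw : nonDelta S w) : v = w := by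
  obtain ⟨v1, v2⟩ := v; obtain ⟨w1, w2⟩ := w
  dsimp at hdim; subst hdim
  have e : v2 = w2 := by
    refine hS.size_le_one v1 v2 w2 ?_ ?_
    · rintro ⟨α, hα⟩; exact hv ⟨v1+1, α⟩ ⟨rfl, hα⟩
    · rintro ⟨α, hα⟩; exact hw ⟨v1+1, α⟩ ⟨rfl, hα⟩
  rw [e]

/-- Iterated targets of the top face. -/
def cface (S : PHg) (n : ℕ) (t : S.FaceS) (m : ℕ) : S.FaceS := (gammaS S)^[n - m] t

lemma gammaS_iter_dim (p : S.FaceS) : ∀ j, j ≤ p.1 → ((gammaS S)^[j] p).1 = p.1 - j := by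
  intro j
  induction j with
  | zero => simp
  | succ j ih =>
    intro h
    rw [Function.iterate_succ_apply']
    have h1 : ((gammaS S)^[j] p).1 = p.1 - j := ih (by omega)
    have h2 : 0 < ((gammaS S)^[j] p).1 := by omega
    have := gammaS_dim (S := S) h2
    omega

lemma cface_dim {n : ℕ} {t : S.FaceS} (ht : t.1 = n) {m : ℕ} (h : m ≤ n) :
    (cface S n t m).1 = m := by
  have := gammaS_iter_dim (S := S) t (n - m) (by omega)
  simp only [cface]; omega

lemma cface_top {n : ℕ} {t : S.FaceS} : cface S n t n = t := by
  simp [cface]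

lemma cface_succ {n : ℕ} {t : S.FaceS} {m : ℕ} (h : m < n) :
    gammaS S (cface S n t (m+1)) = cface S n t m := by
  have : n - m = (n - (m+1)) + 1 := by omega
  simp only [cface, this, Function.iterate_succ_apply']

lemma face_dim_le {n : ℕ} (hn : hasDim S n) (v : S.FaceS) : v.1 ≤ n := by
  by_contra h
  exact (hn.2 v.1 (by omega)).false v.2

/-- The main downward induction: `c m` is non-δ and dominates all faces of dim `m`. -/
lemma cm_main (hS : IsOpetope S) {n : ℕ} (hn : hasDim S n) {t : S.FaceS} (ht : t.1 = n) :
    ∀ m, m ≤ n → (nonDelta S (cface S n t m) ∧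
      ∀ v : S.FaceS, v.1 = m → v = cface S n t m ∨ ltPlus S v (cface S n t m)) := by
  have key : ∀ j m, m ≤ n → n - m ≤ j → (nonDelta S (cface S n t m) ∧
      ∀ v : S.FaceS, v.1 = m → v = cface S n t m ∨ ltPlus S v (cface S n t m)) := by
    intro j
    induction j with
    | zero =>
      intro m hm h0
      have hmn : m = n := by omega
      have hC : nonDelta S (cface S n t m) := by
        intro q hq
        have h1 := inDelta_dim hq
        have h2 := cface_dim (S := S) ht hm
        exact (hn.2 q.1 (by omega)).false q.2
      refine ⟨hC, fun v hv => Or.inl ?_⟩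
      refine eq_of_nonDelta hS ?_ ?_ hC
      · rw [hv, cface_dim ht hm]
      · intro q hq
        have := inDelta_dim hq
        exact (hn.2 q.1 (by omega)).false q.2
    | succ j ih =>
      intro m hm hj
      by_cases hle : n - m ≤ j
      · exact ih m hm hle
      have hmn : m < n := by omega
      obtain ⟨_, hM1⟩ := ih (m+1) (by omega) (by omega)
      -- C m
      have hC : nonDelta S (cface S n t m) := by
        intro w hw
        have hwd : w.1 = m + 1 := by
          have := inDelta_dim hw
          have := cface_dim (S := S) ht (le_of_lt hmn)
          omega
        rcases hM1 w hwd with he | hlt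
        · subst he
          have : covPlus S (cface S n t m) (cface S n t m) :=
            ⟨cface S n t (m+1), hw, cface_succ hmn⟩
          exact hS.strict _ (Relation.TransGen.single this)
        · refine hS.disj (cface S n t (m+1)) w ?_ ⟨?_, Or.inr hlt⟩
          · rw [cface_dim ht (by omega)]; omega
          · refine Or.inl (Relation.TransGen.single ⟨?_, ?_⟩)
            · rw [cface_dim ht (by omega)]; omega
            · rw [cface_succ hmn]; exact hw
      refine ⟨hC, ?_⟩
      -- M m by upward well-founded induction
      intro v
      induction v using (wf_up S hS).induction with
      | _ v ihv =>
        intro hv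
        by_cases hnd : nonDelta S v
        · exact Or.inl (eq_of_nonDelta hS (by rw [hv, cface_dim ht (by omega : m ≤ n)]) hnd hC)
        · simp only [nonDelta, not_forall, not_not] at hnd
          obtain ⟨w, hw⟩ := hnd
          have hcov : covPlus S v (gammaS S w) := ⟨w, hw, rfl⟩
          have hlt : ltPlus S v (gammaS S w) := Relation.TransGen.single hcov
          have hgd : (gammaS S w).1 = m := by
            have d1 := inDelta_dim hw
            have : 0 < w.1 := by omega
            have := gammaS_dim (S := S) this
            omega
          rcases ihv (gammaS S w) hlt hgd with he | hlt2
          · rw [← he]; exact Or.inr hlt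
          · exact Or.inr (ltPlus_trans hlt hlt2)
  intro m hm
  exact key (n - m) m hm le_rfl

end Dev2

section Dev3
variable {S : PHg}

lemma face_n_unique (hS : IsOpetope S) {n : ℕ} (hn : hasDim S n) {t : S.FaceS}
    (ht : t.1 = n) {v : S.FaceS} (hv : v.1 = n) : v = t := by
  have hnd : ∀ w : S.FaceS, w.1 = n → nonDelta S w := by
    intro w hw q hq
    have := inDelta_dim hq
    exact (hn.2 q.1 (by omega)).false q.2
  exact eq_of_nonDelta hS (by omega) (hnd v hv) (hnd t ht)

/-- Some face having `v` in its boundary (junk if none). -/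
noncomputable def parS (S : PHg) (v : S.FaceS) : S.FaceS :=
  if h : ∃ w, inBoundary S v w then Classical.choose h else v

lemma parS_spec (hS : IsOpetope S) {n : ℕ} (hn : hasDim S n) {t : S.FaceS}
    (ht : t.1 = n) {v : S.FaceS} (hv : v.1 < n) : inBoundary S v (parS S v) := by
  have hex : ∃ w, inBoundary S v w := by
    by_cases hd : ∃ q, inDelta S v q
    · obtain ⟨q, hq⟩ := hd; exact ⟨q, Or.inr hq⟩
    · have hnd : nonDelta S v := fun q hq => hd ⟨q, hq⟩
      have hvm := (cm_main hS hn ht v.1 (le_of_lt hv)).1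
      have he : v = cface S n t v.1 :=
        eq_of_nonDelta hS (by rw [cface_dim ht (le_of_lt hv)]) hnd hvm
      refine ⟨cface S n t (v.1+1), Or.inl ⟨?_, ?_⟩⟩
      · rw [cface_dim ht (by omega)]; omega
      · rw [cface_succ hv, ← he]
  rw [parS, dif_pos hex]
  exact Classical.choose_spec hex

lemma parS_dim (hS : IsOpetope S) {n : ℕ} (hn : hasDim S n) {t : S.FaceS}
    (ht : t.1 = n) {v : S.FaceS} (hv : v.1 < n) : (parS S v).1 = v.1 + 1 :=
  (inBoundary_dim (parS_spec hS hn ht hv)).symm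

lemma parS_iter_dim (hS : IsOpetope S) {n : ℕ} (hn : hasDim S n) {t : S.FaceS}
    (ht : t.1 = n) {v : S.FaceS} : ∀ j, v.1 + j ≤ n → ((parS S)^[j] v).1 = v.1 + j := by
  intro j
  induction j with
  | zero => simp
  | succ j ih =>
    intro h
    rw [Function.iterate_succ_apply']
    have h1 : ((parS S)^[j] v).1 = v.1 + j := ih (by omega)
    have := parS_dim hS hn ht (v := (parS S)^[j] v) (by omega)
    omega

/-- `sgnSeg` only depends on the entries below its index. -/
lemma sgnSeg_congr {F G : ℕ → S.FaceS} : ∀ {j : ℕ}, (∀ i, i ≤ j → F i = G i) →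
    sgnSeg S 0 F j = sgnSeg S 0 G j := by
  intro j
  induction j with
  | zero => intro _; rfl
  | succ j ih =>
    intro h
    show (if 0 ≤ j ∧ inDelta S (F j) (F (j+1)) then -(sgnSeg S 0 F j) else sgnSeg S 0 F j)
      = (if 0 ≤ j ∧ inDelta S (G j) (G (j+1)) then -(sgnSeg S 0 G j) else sgnSeg S 0 G j)
    rw [h j (by omega), h (j+1) (by omega), ih (fun i hi => h i (by omega))]

lemma sgnSeg_succ (F : ℕ → S.FaceS) (j : ℕ) :
    sgnSeg S 0 F (j+1) = if inDelta S (F j) (F (j+1)) then -(sgnSeg S 0 F j)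
      else sgnSeg S 0 F j := by
  show (if 0 ≤ j ∧ inDelta S (F j) (F (j+1)) then -(sgnSeg S 0 F j) else sgnSeg S 0 F j) = _
  simp

lemma sgnSeg_cases (F : ℕ → S.FaceS) : ∀ j : ℕ, sgnSeg S 0 F j = 1 ∨ sgnSeg S 0 F j = -1 := by
  intro j
  induction j with
  | zero => exact Or.inl rfl
  | succ j ih =>
    rw [sgnSeg_succ]
    split <;> omega

lemma flagLt_asymm (hS : IsOpetope S) {n : ℕ} {F G : ℕ → S.FaceS}
    (h1 : flagLt S 0 n F G) (h2 : flagLt S 0 n G F) : False := by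
  obtain ⟨k, -, hk2, hagr, hne, hcase⟩ := h1
  obtain ⟨k', -, hk2', hagr', hne', hcase'⟩ := h2
  have hkk : k = k' := by
    rcases lt_trichotomy k k' with h | h | h
    · exact absurd (hagr' k (by omega) h).symm hne
    · exact h
    · exact absurd (hagr k' (by omega) h) (Ne.symm hne')
  subst hkk
  have hFG : ∀ i, i < k → F i = G i := fun i hi => hagr i (by omega) hi
  have hsgn : 0 < k → sgnSeg S 0 F (k-1) = sgnSeg S 0 G (k-1) := fun hk1 =>
    sgnSeg_congr (fun i hi => hFG i (by omega))
  have hFk1 : 0 < k → F (k-1) = G (k-1) := fun hk1 => hFG (k-1) (by omega)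
  rcases hcase with ⟨hk0, hltp⟩ | ⟨hkpos, hs, hp⟩ | ⟨hkpos, hs, hp⟩ <;>
    rcases hcase' with ⟨hk0', hltp'⟩ | ⟨hkpos', hs', hp'⟩ | ⟨hkpos', hs', hp'⟩
  · exact ltPlus_asymm hS hltp hltp'
  · omega
  · omega
  · omega
  · rw [hFk1 hkpos] at hp
    exact pencilLt_asymm hS hp hp'
  · rw [hsgn hkpos] at hs; omega
  · omega
  · rw [hsgn hkpos] at hs; omega
  · rw [hFk1 hkpos] at hp
    exact pencilLt_asymm hS hp hp'

end Dev3

section Dev4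
variable {S : PHg}

/-- Modify flag `F` at level `m0` to `y` and extend upwards generically. -/
noncomputable def modFlag (S : PHg) (F : ℕ → S.FaceS) (m0 : ℕ) (y : S.FaceS) : ℕ → S.FaceS :=
  fun i => if i < m0 then F i else (parS S)^[i - m0] y

lemma modFlag_lt {F : ℕ → S.FaceS} {m0 : ℕ} {y : S.FaceS} {i : ℕ} (h : i < m0) :
    modFlag S F m0 y i = F i := if_pos h

lemma modFlag_self {F : ℕ → S.FaceS} {m0 : ℕ} {y : S.FaceS} :
    modFlag S F m0 y m0 = y := by simp [modFlag]

lemma modFlag_good (hS : IsOpetope S) {n : ℕ} (hn : hasDim S n) {t : S.FaceS} (ht : t.1 = n)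
    {F : ℕ → S.FaceS} {m0 : ℕ} {y : S.FaceS}
    (hF : IsRFlag S n 0 F) (hm : m0 ≤ n) (hy : y.1 = m0)
    (hybd : 0 < m0 → inBoundary S (F (m0-1)) y) :
    IsRFlag S n 0 (modFlag S F m0 y) ∧ modFlag S F m0 y n = t := by
  have hdim : ∀ i, i ≤ n → (modFlag S F m0 y i).1 = i := by
    intro i hi
    by_cases h : i < m0
    · rw [modFlag_lt h]; exact hF.1 i (by omega) hi
    · rw [show modFlag S F m0 y i = (parS S)^[i - m0] y from if_neg h,
        parS_iter_dim hS hn ht (i - m0) (by omega)]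
      omega
  have hbd : ∀ i, i < n → inBoundary S (modFlag S F m0 y i) (modFlag S F m0 y (i+1)) := by
    intro i hi
    rcases lt_trichotomy (i+1) m0 with h | h | h
    · rw [modFlag_lt (by omega), modFlag_lt h]; exact hF.2 i (by omega) hi
    · rw [modFlag_lt (by omega)]
      have h2 : modFlag S F m0 y (i+1) = y := by rw [h]; exact modFlag_self
      rw [h2]
      have h3 := hybd (by omega)
      have hi1 : i = m0 - 1 := by omega
      rw [hi1]; exact h3
    · have h1 : ¬ (i < m0) := by omega
      have h2 : ¬ (i+1 < m0) := by omega
      show inBoundary S (modFlag S F m0 y i) (modFlag S F m0 y (i+1))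
      rw [show modFlag S F m0 y i = (parS S)^[i - m0] y from if_neg h1,
        show modFlag S F m0 y (i+1) = (parS S)^[i+1 - m0] y from if_neg h2,
        show i+1-m0 = (i - m0) + 1 by omega, Function.iterate_succ_apply']
      refine parS_spec hS hn ht ?_
      rw [parS_iter_dim hS hn ht (i - m0) (by omega)]; omega
  exact ⟨⟨fun i _ hi => hdim i hi, fun i _ hi => hbd i hi⟩,
    face_n_unique hS hn ht (hdim n le_rfl)⟩

/-- All the ambient data of the main theorem, with `k` the first level where the
two consecutive flags differ. -/
structure Ctx (S : PHg) (n : ℕ) (t : S.FaceS) (F G : ℕ → S.FaceS) (k : ℕ) : Prop where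
  hS : IsOpetope S
  hn : hasDim S n
  ht : t.1 = n
  hF : IsRFlag S n 0 F
  hFt : F n = t
  hG : IsRFlag S n 0 G
  hGt : G n = t
  hk : k ≤ n
  hagr : ∀ i, i < k → F i = G i
  hne : F k ≠ G k
  hcase : (k = 0 ∧ ltPlus S (G 0) (F 0)) ∨
    (0 < k ∧ sgnSeg S 0 F (k-1) = 1 ∧ pencilLt S (F (k-1)) (F k) (G k)) ∨
    (0 < k ∧ sgnSeg S 0 F (k-1) = -1 ∧ pencilLt S (F (k-1)) (G k) (F k))
  hsucc : ∀ H, IsRFlag S n 0 H → H n = t → flagLt S 0 n F H →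
      (EqOnFl 0 n G H ∨ flagLt S 0 n G H)

namespace Ctx
variable {n : ℕ} {t : S.FaceS} {F G : ℕ → S.FaceS} {k : ℕ}

lemma succ_contra (hc : Ctx S n t F G k) {H : ℕ → S.FaceS} (hH : IsRFlag S n 0 H)
    (hHt : H n = t) (h1 : flagLt S 0 n F H) (h2 : flagLt S 0 n H G) : False := by
  rcases hc.hsucc H hH hHt h1 with he | hgh
  · obtain ⟨k', hk0, hk2, _, hne, _⟩ := h2
    exact hne ((he k' hk0 hk2).symm)
  · exact flagLt_asymm hc.hS h2 hgh

lemma knen (hc : Ctx S n t F G k) : k < n := by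
  rcases Nat.lt_or_ge k n with h | h
  · exact h
  · have hkn := hc.hk
    have : k = n := by omega
    subst this
    exact absurd (hc.hFt.trans hc.hGt.symm) hc.hne

/-- `flagLt H G` for any `H` that looks like `F` at and below level `k`. -/
lemma flagLt_toG (hc : Ctx S n t F G k) {H : ℕ → S.FaceS}
    (hag : ∀ i, i ≤ k → H i = F i) : flagLt S 0 n H G := by
  refine ⟨k, Nat.zero_le k, hc.hk, fun i _ hi => (hag i (by omega)).trans (hc.hagr i hi),
    by rw [hag k le_rfl]; exact hc.hne, ?_⟩
  have hsg : 0 < k → sgnSeg S 0 H (k-1) = sgnSeg S 0 F (k-1) := fun h =>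
    sgnSeg_congr (fun i hi => hag i (by omega))
  rcases hc.hcase with ⟨hk0, hl⟩ | ⟨hkp, hs1, hp1⟩ | ⟨hkp, hs1, hp1⟩
  · exact Or.inl ⟨hk0, by rw [hag 0 (by omega)]; exact hl⟩
  · exact Or.inr (Or.inl ⟨hkp, (hsg hkp).trans hs1,
      by rw [hag (k-1) (by omega), hag k le_rfl]; exact hp1⟩)
  · exact Or.inr (Or.inr ⟨hkp, (hsg hkp).trans hs1,
      by rw [hag (k-1) (by omega), hag k le_rfl]; exact hp1⟩)

/-- `flagLt F H` for any `H` that looks like `G` at and below level `k`. -/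
lemma flagLt_fromF (hc : Ctx S n t F G k) {H : ℕ → S.FaceS}
    (hag : ∀ i, i ≤ k → H i = G i) : flagLt S 0 n F H := by
  refine ⟨k, Nat.zero_le k, hc.hk, fun i _ hi => (hc.hagr i hi).trans (hag i (by omega)).symm,
    by rw [hag k le_rfl]; exact hc.hne, ?_⟩
  rcases hc.hcase with ⟨hk0, hl⟩ | ⟨hkp, hs1, hp1⟩ | ⟨hkp, hs1, hp1⟩
  · exact Or.inl ⟨hk0, by rw [hag 0 (by omega)]; exact hl⟩
  · exact Or.inr (Or.inl ⟨hkp, hs1, by rw [hag k le_rfl]; exact hp1⟩)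
  · exact Or.inr (Or.inr ⟨hkp, hs1, by rw [hag k le_rfl]; exact hp1⟩)

/-- F-side extremality principle. -/
lemma noF (hc : Ctx S n t F G k) {m0 : ℕ} (h1 : k < m0) (h2 : m0 < n) {y : S.FaceS}
    (hy : inBoundary S (F (m0-1)) y) :
    (sgnSeg S 0 F (m0-1) = 1 → ¬ pencilLt S (F (m0-1)) (F m0) y) ∧
    (sgnSeg S 0 F (m0-1) = -1 → ¬ pencilLt S (F (m0-1)) y (F m0)) := by
  have hyd : y.1 = m0 := by
    have := inBoundary_dim hy
    have := hc.hF.1 (m0-1) (by omega) (by omega)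
    omega
  have hgood := modFlag_good hc.hS hc.hn hc.ht hc.hF (le_of_lt h2) hyd (fun _ => hy)
  have hto : flagLt S 0 n (modFlag S F m0 y) G :=
    hc.flagLt_toG (fun i hi => modFlag_lt (by omega))
  constructor
  · intro hs hp
    have hne2 : F m0 ≠ y := fun he => pencilLt_irrefl hc.hS (he ▸ hp)
    refine hc.succ_contra hgood.1 hgood.2 ⟨m0, Nat.zero_le _, by omega,
      fun i _ hi => (modFlag_lt hi).symm, by rw [modFlag_self]; exact hne2,
      Or.inr (Or.inl ⟨by omega, hs, by rw [modFlag_self]; exact hp⟩)⟩ hto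
  · intro hs hp
    have hne2 : F m0 ≠ y := fun he => pencilLt_irrefl hc.hS (he ▸ hp)
    refine hc.succ_contra hgood.1 hgood.2 ⟨m0, Nat.zero_le _, by omega,
      fun i _ hi => (modFlag_lt hi).symm, by rw [modFlag_self]; exact hne2,
      Or.inr (Or.inr ⟨by omega, hs, by rw [modFlag_self]; exact hp⟩)⟩ hto

/-- G-side extremality principle. -/
lemma noG (hc : Ctx S n t F G k) {m0 : ℕ} (h1 : k < m0) (h2 : m0 < n) {y : S.FaceS}
    (hy : inBoundary S (G (m0-1)) y) :
    (sgnSeg S 0 G (m0-1) = 1 → ¬ pencilLt S (G (m0-1)) y (G m0)) ∧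
    (sgnSeg S 0 G (m0-1) = -1 → ¬ pencilLt S (G (m0-1)) (G m0) y) := by
  have hyd : y.1 = m0 := by
    have := inBoundary_dim hy
    have := hc.hG.1 (m0-1) (by omega) (by omega)
    omega
  have hgood := modFlag_good hc.hS hc.hn hc.ht hc.hG (le_of_lt h2) hyd (fun _ => hy)
  have hfrom : flagLt S 0 n F (modFlag S G m0 y) :=
    hc.flagLt_fromF (fun i hi => modFlag_lt (by omega))
  have hsg : sgnSeg S 0 (modFlag S G m0 y) (m0-1) = sgnSeg S 0 G (m0-1) :=
    sgnSeg_congr (fun i hi => modFlag_lt (by omega))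
  constructor
  · intro hs hp
    have hne2 : y ≠ G m0 := fun he => pencilLt_irrefl hc.hS (he ▸ hp)
    refine hc.succ_contra hgood.1 hgood.2 hfrom ⟨m0, Nat.zero_le _, by omega,
      fun i _ hi => modFlag_lt hi, by rw [modFlag_self]; exact hne2,
      Or.inr (Or.inl ⟨by omega, hsg.trans hs, ?_⟩)⟩
    rw [modFlag_self, modFlag_lt (by omega)]
    exact hp
  · intro hs hp
    have hne2 : y ≠ G m0 := fun he => pencilLt_irrefl hc.hS (he ▸ hp)
    refine hc.succ_contra hgood.1 hgood.2 hfrom ⟨m0, Nat.zero_le _, by omega,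
      fun i _ hi => modFlag_lt hi, by rw [modFlag_self]; exact hne2,
      Or.inr (Or.inr ⟨by omega, hsg.trans hs, ?_⟩)⟩
    rw [modFlag_self, modFlag_lt (by omega)]
    exact hp

/-- No flag strictly between `F` and `G` at level `k` itself (positive `k`). -/
lemma noMid (hc : Ctx S n t F G k) (hkp : 0 < k) {y : S.FaceS}
    (hy : inBoundary S (F (k-1)) y) :
    (sgnSeg S 0 F (k-1) = 1 →
      ¬ (pencilLt S (F (k-1)) (F k) y ∧ pencilLt S (F (k-1)) y (G k))) ∧
    (sgnSeg S 0 F (k-1) = -1 →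
      ¬ (pencilLt S (F (k-1)) (G k) y ∧ pencilLt S (F (k-1)) y (F k))) := by
  have hyd : y.1 = k := by
    have hkn := hc.hk
    have := inBoundary_dim hy
    have := hc.hF.1 (k-1) (by omega) (by omega)
    omega
  have hgood := modFlag_good hc.hS hc.hn hc.ht hc.hF (le_of_lt hc.knen) hyd (fun _ => hy)
  have hsg : sgnSeg S 0 (modFlag S F k y) (k-1) = sgnSeg S 0 F (k-1) :=
    sgnSeg_congr (fun i hi => modFlag_lt (by omega))
  constructor
  · rintro hs ⟨hp1, hp2⟩
    have hne1 : F k ≠ y := fun he => pencilLt_irrefl hc.hS (he ▸ hp1)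
    have hne2 : y ≠ G k := fun he => pencilLt_irrefl hc.hS (he ▸ hp2)
    refine hc.succ_contra hgood.1 hgood.2
      ⟨k, Nat.zero_le _, hc.hk, fun i _ hi => (modFlag_lt hi).symm,
        by rw [modFlag_self]; exact hne1,
        Or.inr (Or.inl ⟨hkp, hs, by rw [modFlag_self]; exact hp1⟩)⟩
      ⟨k, Nat.zero_le _, hc.hk, fun i _ hi => (modFlag_lt hi).trans (hc.hagr i hi),
        by rw [modFlag_self]; exact hne2,
        Or.inr (Or.inl ⟨hkp, hsg.trans hs, ?_⟩)⟩
    rw [modFlag_self, modFlag_lt (by omega)]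
    exact hp2
  · rintro hs ⟨hp1, hp2⟩
    have hne1 : F k ≠ y := fun he => pencilLt_irrefl hc.hS (he ▸ hp2)
    have hne2 : y ≠ G k := fun he => pencilLt_irrefl hc.hS (he ▸ hp1)
    refine hc.succ_contra hgood.1 hgood.2
      ⟨k, Nat.zero_le _, hc.hk, fun i _ hi => (modFlag_lt hi).symm,
        by rw [modFlag_self]; exact hne1,
        Or.inr (Or.inr ⟨hkp, hs, by rw [modFlag_self]; exact hp2⟩)⟩
      ⟨k, Nat.zero_le _, hc.hk, fun i _ hi => (modFlag_lt hi).trans (hc.hagr i hi),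
        by rw [modFlag_self]; exact hne2,
        Or.inr (Or.inr ⟨hkp, hsg.trans hs, ?_⟩)⟩
    rw [modFlag_self, modFlag_lt (by omega)]
    exact hp1

/-- No flag strictly between `F` and `G` at level `0`. -/
lemma noMid0 (hc : Ctx S n t F G k) {y : S.FaceS} (hyd : y.1 = 0) :
    ¬ (ltPlus S y (F 0) ∧ ltPlus S (G 0) y) := by
  rintro ⟨hp1, hp2⟩
  have hn0 : 0 < n := by have := hc.knen; omega
  have hne1 : F 0 ≠ y := by
    rintro rfl; exact ltPlus_asymm hc.hS hp1 hp1
  have hne2 : y ≠ G 0 := by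
    rintro rfl; exact ltPlus_asymm hc.hS hp2 hp2
  have hgood := modFlag_good hc.hS hc.hn hc.ht hc.hF (le_of_lt hn0) hyd
    (fun h => absurd h (by omega))
  refine hc.succ_contra hgood.1 hgood.2
    ⟨0, Nat.zero_le _, Nat.zero_le _, fun i _ hi => by omega,
      by rw [modFlag_self]; exact hne1, Or.inl ⟨rfl, by rw [modFlag_self]; exact hp1⟩⟩
    ⟨0, Nat.zero_le _, Nat.zero_le _, fun i _ hi => by omega,
      by rw [modFlag_self]; exact hne2,
      Or.inl ⟨rfl, by rw [modFlag_self]; exact hp2⟩⟩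

end Ctx
end Dev4

section Dev5
variable {S : PHg}

/-- M1: a ≺-maximal γ-type pencil element is not a codomain. -/
lemma mid_max_gamma (hS : IsOpetope S) {x y : S.FaceS} (hg : inGammaS S x y)
    (hno : ∀ z, inBoundary S x z → ¬ pencilLt S x y z)
    {w : S.FaceS} (hw : inGammaS S y w) : False := by
  have hd1 := inGammaS_dim hg
  have hd2 := inGammaS_dim hw
  have hglob := hS.glob_gamma w (by omega)
  have hx : x ∈ ({gammaS S (gammaS S w)} : Set S.FaceS) := by
    rw [Set.mem_singleton_iff, hw.2, hg.2]
  rw [hglob] at hx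
  obtain ⟨⟨y', h1, h2⟩, -⟩ := hx
  have hyd : 0 < y'.1 := by
    have := inDelta_dim h1; omega
  have hcov : covPlus S y' y := ⟨w, h1, hw.2⟩
  exact hno y' (Or.inl ⟨hyd, h2⟩)
    (Or.inr (Or.inr ⟨hg, ⟨hyd, h2⟩, Relation.TransGen.single hcov⟩))

/-- M2: a ≺-maximal δ-type pencil element is in no δ. -/
lemma mid_max_delta (hS : IsOpetope S) {x y : S.FaceS} (hd : inDelta S x y)
    (hno : ∀ z, inBoundary S x z → ¬ pencilLt S x y z)
    {w : S.FaceS} (hw : inDelta S y w) : False := by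
  have hd1 := inDelta_dim hd
  have hd2 := inDelta_dim hw
  have hglob := hS.glob_delta w (by omega)
  by_cases hxg : x ∈ {x' | ∃ y', inDelta S y' w ∧ gammaS S y' = x'}
  · obtain ⟨u, huw, huγ⟩ := hxg
    have hud : 0 < u.1 := by have := inDelta_dim huw; omega
    exact hno u (Or.inl ⟨hud, huγ⟩) (Or.inl ⟨⟨hud, huγ⟩, hd⟩)
  · have hx : x ∈ {x' | ∃ y', inDelta S y' w ∧ inDelta S x' y'} := ⟨y, hw, hd⟩
    have hx2 : x ∈ {x' | inDelta S x' (gammaS S w)} := by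
      rw [hglob]; exact ⟨hx, hxg⟩
    have hcov : covPlus S y (gammaS S w) := ⟨w, hw, rfl⟩
    exact hno (gammaS S w) (Or.inr hx2)
      (Or.inr (Or.inl ⟨hd, hx2, Relation.TransGen.single hcov⟩))

/-- M3: a ≺-minimal δ-type pencil element is not a codomain. -/
lemma mid_min_delta (hS : IsOpetope S) {x y : S.FaceS} (hd : inDelta S x y)
    (hno : ∀ z, inBoundary S x z → ¬ pencilLt S x z y)
    {w : S.FaceS} (hw : inGammaS S y w) : False := by
  have hd1 := inDelta_dim hd
  have hd2 := inGammaS_dim hw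
  have hglob := hS.glob_delta w (by omega)
  have hx : x ∈ {x' | inDelta S x' (gammaS S w)} := by rw [hw.2]; exact hd
  rw [hglob] at hx
  obtain ⟨⟨u, huw, hxu⟩, -⟩ := hx
  have hcov : covPlus S u y := ⟨w, huw, hw.2⟩
  exact hno u (Or.inr hxu) (Or.inr (Or.inl ⟨hxu, hd, Relation.TransGen.single hcov⟩))

/-- M4: a ≺-minimal γ-type pencil element is in no δ. -/
lemma mid_min_gamma (hS : IsOpetope S) {x y : S.FaceS} (hg : inGammaS S x y)
    (hno : ∀ z, inBoundary S x z → ¬ pencilLt S x z y)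
    {w : S.FaceS} (hw : inDelta S y w) : False := by
  have hd1 := inGammaS_dim hg
  have hd2 := inDelta_dim hw
  have hglob := hS.glob_gamma w (by omega)
  by_cases hxu : x ∈ {x' | ∃ y', inDelta S y' w ∧ inDelta S x' y'}
  · obtain ⟨u, huw, hxu⟩ := hxu
    exact hno u (Or.inr hxu) (Or.inl ⟨hg, hxu⟩)
  · have hx : x ∈ ({gammaS S (gammaS S w)} : Set S.FaceS) := by
      rw [hglob]
      exact ⟨⟨y, hw, hg.2⟩, hxu⟩
    rw [Set.mem_singleton_iff] at hx
    have hrd : 0 < (gammaS S w).1 := by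
      have := gammaS_dim (S := S) (q := w) (by omega); omega
    have hcov : covPlus S y (gammaS S w) := ⟨w, hw, rfl⟩
    exact hno (gammaS S w) (Or.inl ⟨hrd, hx.symm⟩)
      (Or.inr (Or.inr ⟨⟨hrd, hx.symm⟩, hg, Relation.TransGen.single hcov⟩))

/-- If a γ-type element is ≺-minimal then the pencil is pure-γ: the base is in no δ. -/
lemma min_gamma_pure (hS : IsOpetope S) {x y : S.FaceS} (hg : inGammaS S x y)
    (hno : ∀ z, inBoundary S x z → ¬ pencilLt S x z y) : nonDelta S x := by
  intro z hz
  exact hno z (Or.inr hz) (Or.inl ⟨hg, hz⟩)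

/-- If a δ-type element is ≺-maximal then the pencil is pure-δ: the base is not a codomain. -/
lemma max_delta_pure (hS : IsOpetope S) {x y : S.FaceS} (hd : inDelta S x y)
    (hno : ∀ z, inBoundary S x z → ¬ pencilLt S x y z) :
    ∀ z, ¬ inGammaS S x z := by
  intro z hz
  exact hno z (Or.inl hz) (Or.inl ⟨hz, hd⟩)

end Dev5

section Dev6
variable {S : PHg}
namespace Ctx
variable {n : ℕ} {t : S.FaceS} {F G : ℕ → S.FaceS} {k : ℕ}

lemma sgnF_step (hc : Ctx S n t F G k) {m0 : ℕ} (h1 : k < m0) (h2 : m0 < n) :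
    sgnSeg S 0 F (m0+1) = -1 := by
  have hm1 : m0 - 1 + 1 = m0 := by omega
  have hbd1 : inBoundary S (F (m0-1)) (F m0) := by
    have := hc.hF.2 (m0-1) (by omega) (by omega)
    rwa [hm1] at this
  have hbd2 : inBoundary S (F m0) (F (m0+1)) := hc.hF.2 m0 (by omega) h2
  have hstep1 : sgnSeg S 0 F m0 = if inDelta S (F (m0-1)) (F m0)
      then -(sgnSeg S 0 F (m0-1)) else sgnSeg S 0 F (m0-1) := by
    conv_lhs => rw [← hm1]
    rw [sgnSeg_succ, hm1]
  have hstep2 := sgnSeg_succ F m0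
  rcases sgnSeg_cases F (m0-1) with hσ | hσ
  · have hno : ∀ z, inBoundary S (F (m0-1)) z → ¬ pencilLt S (F (m0-1)) (F m0) z :=
      fun z hz => (hc.noF h1 h2 hz).1 hσ
    rcases hbd1 with hg | hd
    · have hδ2 : inDelta S (F m0) (F (m0+1)) := by
        rcases hbd2 with hg2 | hd2
        · exact (mid_max_gamma hc.hS hg hno hg2).elim
        · exact hd2
      have hnd1 : ¬ inDelta S (F (m0-1)) (F m0) :=
        fun hd => not_inGammaS_and_inDelta hc.hS hg hd
      rw [hstep2, if_pos hδ2, hstep1, if_neg hnd1, hσ]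
    · have hγ2 : ¬ inDelta S (F m0) (F (m0+1)) :=
        fun hd2 => mid_max_delta hc.hS hd hno hd2
      rw [hstep2, if_neg hγ2, hstep1, if_pos hd, hσ]
  · have hno : ∀ z, inBoundary S (F (m0-1)) z → ¬ pencilLt S (F (m0-1)) z (F m0) :=
      fun z hz => (hc.noF h1 h2 hz).2 hσ
    rcases hbd1 with hg | hd
    · have hγ2 : ¬ inDelta S (F m0) (F (m0+1)) :=
        fun hd2 => mid_min_gamma hc.hS hg hno hd2
      have hnd1 : ¬ inDelta S (F (m0-1)) (F m0) :=
        fun hd => not_inGammaS_and_inDelta hc.hS hg hd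
      rw [hstep2, if_neg hγ2, hstep1, if_neg hnd1, hσ]
    · have hδ2 : inDelta S (F m0) (F (m0+1)) := by
        rcases hbd2 with hg2 | hd2
        · exact (mid_min_delta hc.hS hd hno hg2).elim
        · exact hd2
      rw [hstep2, if_pos hδ2, hstep1, if_pos hd, hσ]
      norm_num

lemma sgnG_step (hc : Ctx S n t F G k) {m0 : ℕ} (h1 : k < m0) (h2 : m0 < n) :
    sgnSeg S 0 G (m0+1) = 1 := by
  have hm1 : m0 - 1 + 1 = m0 := by omega
  have hbd1 : inBoundary S (G (m0-1)) (G m0) := by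
    have := hc.hG.2 (m0-1) (by omega) (by omega)
    rwa [hm1] at this
  have hbd2 : inBoundary S (G m0) (G (m0+1)) := hc.hG.2 m0 (by omega) h2
  have hstep1 : sgnSeg S 0 G m0 = if inDelta S (G (m0-1)) (G m0)
      then -(sgnSeg S 0 G (m0-1)) else sgnSeg S 0 G (m0-1) := by
    conv_lhs => rw [← hm1]
    rw [sgnSeg_succ, hm1]
  have hstep2 := sgnSeg_succ G m0
  rcases sgnSeg_cases G (m0-1) with hσ | hσ
  · have hno : ∀ z, inBoundary S (G (m0-1)) z → ¬ pencilLt S (G (m0-1)) z (G m0) :=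
      fun z hz => (hc.noG h1 h2 hz).1 hσ
    rcases hbd1 with hg | hd
    · have hγ2 : ¬ inDelta S (G m0) (G (m0+1)) :=
        fun hd2 => mid_min_gamma hc.hS hg hno hd2
      have hnd1 : ¬ inDelta S (G (m0-1)) (G m0) :=
        fun hd => not_inGammaS_and_inDelta hc.hS hg hd
      rw [hstep2, if_neg hγ2, hstep1, if_neg hnd1, hσ]
    · have hδ2 : inDelta S (G m0) (G (m0+1)) := by
        rcases hbd2 with hg2 | hd2
        · exact (mid_min_delta hc.hS hd hno hg2).elim
        · exact hd2
      rw [hstep2, if_pos hδ2, hstep1, if_pos hd, hσ]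
      norm_num
  · have hno : ∀ z, inBoundary S (G (m0-1)) z → ¬ pencilLt S (G (m0-1)) (G m0) z :=
      fun z hz => (hc.noG h1 h2 hz).2 hσ
    rcases hbd1 with hg | hd
    · have hδ2 : inDelta S (G m0) (G (m0+1)) := by
        rcases hbd2 with hg2 | hd2
        · exact (mid_max_gamma hc.hS hg hno hg2).elim
        · exact hd2
      have hnd1 : ¬ inDelta S (G (m0-1)) (G m0) :=
        fun hd => not_inGammaS_and_inDelta hc.hS hg hd
      rw [hstep2, if_pos hδ2, hstep1, if_neg hnd1, hσ]
      norm_num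
    · have hγ2 : ¬ inDelta S (G m0) (G (m0+1)) :=
        fun hd2 => mid_max_delta hc.hS hd hno hd2
      rw [hstep2, if_neg hγ2, hstep1, if_pos hd, hσ]
      norm_num

lemma sgnF_range (hc : Ctx S n t F G k) {j : ℕ} (h1 : k+2 ≤ j) (h2 : j ≤ n) :
    sgnSeg S 0 F j = -1 := by
  have he : j = (j-1)+1 := by omega
  rw [he]
  exact hc.sgnF_step (by omega) (by omega)

lemma sgnG_range (hc : Ctx S n t F G k) {j : ℕ} (h1 : k+2 ≤ j) (h2 : j ≤ n) :
    sgnSeg S 0 G j = 1 := by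
  have he : j = (j-1)+1 := by omega
  rw [he]
  exact hc.sgnG_step (by omega) (by omega)

lemma gammaStepF (hc : Ctx S n t F G k) {m : ℕ} (h1 : k+2 ≤ m) (h2 : m < n) :
    F m = gammaS S (F (m+1)) := by
  have s1 := hc.sgnF_range h1 (by omega)
  have s2 := hc.sgnF_range (j := m+1) (by omega) (by omega)
  have hs := sgnSeg_succ F m
  have hnd : ¬ inDelta S (F m) (F (m+1)) := by
    intro hd; rw [if_pos hd, s1] at hs; omega
  rcases hc.hF.2 m (by omega) h2 with hg | hd
  · exact hg.2.symm
  · exact absurd hd hnd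

lemma gammaStepG (hc : Ctx S n t F G k) {m : ℕ} (h1 : k+2 ≤ m) (h2 : m < n) :
    G m = gammaS S (G (m+1)) := by
  have s1 := hc.sgnG_range h1 (by omega)
  have s2 := hc.sgnG_range (j := m+1) (by omega) (by omega)
  have hs := sgnSeg_succ G m
  have hnd : ¬ inDelta S (G m) (G (m+1)) := by
    intro hd; rw [if_pos hd, s1] at hs; omega
  rcases hc.hG.2 m (by omega) h2 with hg | hd
  · exact hg.2.symm
  · exact absurd hd hnd

/-- The two flags agree strictly above level `k+1`. -/
lemma eq_above (hc : Ctx S n t F G k) : ∀ m, k+2 ≤ m → m ≤ n → F m = G m := by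
  have key : ∀ j m, k+2 ≤ m → m ≤ n → n - m ≤ j → F m = G m := by
    intro j
    induction j with
    | zero =>
      intro m h1 h2 h0
      have : m = n := by omega
      rw [this, hc.hFt, hc.hGt]
    | succ j ih =>
      intro m h1 h2 hj
      by_cases h : n - m ≤ j
      · exact ih m h1 h2 h
      · have hmn : m < n := by omega
        rw [hc.gammaStepF h1 hmn, hc.gammaStepG h1 hmn, ih (m+1) (by omega) (by omega) (by omega)]
  exact fun m h1 h2 => key (n-m) m h1 h2 le_rfl

end Ctx
end Dev6

section Dev7
variable {S : PHg}

lemma pencilLt_bd {x a b : S.FaceS} (h : pencilLt S x a b) :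
    inBoundary S x a ∧ inBoundary S x b := by
  rcases h with ⟨h1, h2⟩ | ⟨h1, h2, h3⟩ | ⟨h1, h2, h3⟩
  · exact ⟨Or.inr h2, Or.inl h1⟩
  · exact ⟨Or.inr h1, Or.inr h2⟩
  · exact ⟨Or.inl h1, Or.inl h2⟩

/-- At the top dimension, any `<⁺`-chain ends at `γ t`. -/
lemma ltPlus_topdim (hS : IsOpetope S) {n : ℕ} (hn : hasDim S n) {t : S.FaceS}
    (ht : t.1 = n) {a b : S.FaceS} (h : ltPlus S a b) (hd : a.1 + 1 = n) :
    b = gammaS S t := by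
  have key : ∀ {c d : S.FaceS}, covPlus S c d → c.1 + 1 = n → d = gammaS S t := by
    rintro c d ⟨α, hδ, hγ⟩ hc
    have hαd : α.1 = n := by have := inDelta_dim hδ; omega
    have : α = t := face_n_unique hS hn ht hαd
    rw [← hγ, this]
  induction h with
  | single hcov => exact key hcov hd
  | tail h1 hcov _ =>
    have := ltPlus_dim h1
    exact key hcov (by omega)

lemma top_classify (hS : IsOpetope S) {n : ℕ} (hn : hasDim S n) {t : S.FaceS}
    (ht : t.1 = n) {z : S.FaceS} (hz : z.1 + 1 = n) :
    inDelta S z t ∨ z = gammaS S t := by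
  by_cases hd : ∃ q, inDelta S z q
  · obtain ⟨q, hq⟩ := hd
    have : q = t := face_n_unique hS hn ht (by have := inDelta_dim hq; omega)
    exact Or.inl (this ▸ hq)
  · have hnd : nonDelta S z := fun q hq => hd ⟨q, hq⟩
    have h1 : cface S n t (n-1) = gammaS S t := by
      have := cface_succ (S := S) (n := n) (t := t) (m := n-1) (by omega)
      rw [show n - 1 + 1 = n by omega, cface_top] at this
      exact this.symm
    have := eq_of_nonDelta hS (v := z) (w := cface S n t (n-1))
      (by rw [cface_dim ht (by omega)]; omega) hnd (cm_main hS hn ht (n-1) (by omega)).1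
    rw [this, h1]
    exact Or.inr rfl

/-- The two "positive type product" combinations force a ≺-maximum at the top. -/
lemma top_max (hS : IsOpetope S) {n : ℕ} (hn : hasDim S n) {t : S.FaceS}
    (ht : t.1 = n) {x y : S.FaceS} (hdim : y.1 + 1 = n)
    (hcomb : (inDelta S x y ∧ inGammaS S y t) ∨ (inGammaS S x y ∧ inDelta S y t)) :
    ∀ z, inBoundary S x z → z ≠ y → pencilLt S x z y := by
  intro z hz hne
  rcases hcomb with ⟨hd, hgt⟩ | ⟨hg, hdt⟩
  · have hxd := inDelta_dim hd
    have hzdim : z.1 = y.1 := by have := inBoundary_dim hz; omega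
    rcases top_classify hS hn ht (z := z) (by omega) with hzt | hzt
    · have hcov : covPlus S z (gammaS S t) := ⟨t, hzt, rfl⟩
      rw [hgt.2] at hcov
      rcases hz with hzg | hzd
      · exfalso
        have hglob := hS.glob_delta t (by omega)
        have hx : x ∈ {x' | inDelta S x' (gammaS S t)} := by rw [hgt.2]; exact hd
        rw [hglob] at hx
        exact hx.2 ⟨z, hzt, hzg.2⟩
      · exact Or.inr (Or.inl ⟨hzd, hd, Relation.TransGen.single hcov⟩)
    · exact absurd (hzt.trans hgt.2) hne
  · rcases hz with hzg | hzd
    · have hzy : ¬ ltPlus S z y := by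
        intro h
        have hdims : z.1 + 1 = n := by
          have := inBoundary_dim (Or.inl hzg : inBoundary S x z)
          have := inGammaS_dim hg; omega
        have hy := ltPlus_topdim hS hn ht h hdims
        exact not_inGammaS_and_inDelta hS ⟨by omega, hy.symm⟩ hdt
      rcases hS.pencil_gamma x z y hzg hg with he | hp | hp
      · exact absurd he hne
      · exact absurd hp hzy
      · exact Or.inr (Or.inr ⟨hzg, hg, hp⟩)
    · exact Or.inl ⟨hg, hzd⟩

/-- The two "negative type product" combinations force a ≺-minimum at the top. -/
lemma top_min (hS : IsOpetope S) {n : ℕ} (hn : hasDim S n) {t : S.FaceS}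
    (ht : t.1 = n) {x y : S.FaceS} (hdim : y.1 + 1 = n)
    (hcomb : (inDelta S x y ∧ inDelta S y t) ∨ (inGammaS S x y ∧ inGammaS S y t)) :
    ∀ z, inBoundary S x z → z ≠ y → pencilLt S x y z := by
  intro z hz hne
  rcases hcomb with ⟨hd, hdt⟩ | ⟨hg, hgt⟩
  · rcases hz with hzg | hzd
    · exact Or.inl ⟨hzg, hd⟩
    · have hzy : ¬ ltPlus S z y := by
        intro h
        have hdims : z.1 + 1 = n := by
          have := inBoundary_dim (Or.inr hzd : inBoundary S x z)
          have := inDelta_dim hd; omega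
        have hy := ltPlus_topdim hS hn ht h hdims
        exact not_inGammaS_and_inDelta hS ⟨by omega, hy.symm⟩ hdt
      rcases hS.pencil_delta x z y hzd hd with he | hp | hp
      · exact absurd he hne
      · exact absurd hp hzy
      · exact Or.inr (Or.inl ⟨hd, hzd, hp⟩)
  · rcases hz with hzg | hzd
    · have hyz : ¬ ltPlus S y z := by
        intro h
        have hz2 := ltPlus_topdim hS hn ht h hdim
        exact hne (hz2.trans hgt.2)
      rcases hS.pencil_gamma x y z hg hzg with he | hp | hp
      · exact absurd he.symm hne
      · exact absurd hp hyz
      · exact Or.inr (Or.inr ⟨hg, hzg, hp⟩)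
    · exfalso
      have hxd := inGammaS_dim hg
      have hn2 : 2 ≤ n := by omega
      have hx : x = cface S n t (n-2) := by
        have h1 : cface S n t (n-1) = gammaS S t := by
          have := cface_succ (S := S) (n := n) (t := t) (m := n-1) (by omega)
          rw [show n - 1 + 1 = n by omega, cface_top] at this
          exact this.symm
        have h2 : cface S n t (n-2) = gammaS S (cface S n t (n-1)) := by
          have := cface_succ (S := S) (n := n) (t := t) (m := n-2) (by omega)
          rw [show n - 2 + 1 = n - 1 by omega] at this
          exact this.symm
        rw [h2, h1, hgt.2, hg.2]
      exact (cm_main hS hn ht (n-2) (by omega)).1 z (hx ▸ hzd)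

end Dev7

section Dev8
variable {S : PHg}
namespace Ctx
variable {n : ℕ} {t : S.FaceS} {F G : ℕ → S.FaceS} {k : ℕ}

lemma sgn_top (hc : Ctx S n t F G k) (he : k + 1 = n) : sgnSeg S 0 F n = 1 := by
  have hFt : F (k+1) = t := by rw [he]; exact hc.hFt
  rcases hc.hcase with ⟨hk0, hl⟩ | ⟨hkp, hσ, hp⟩ | ⟨hkp, hσ, hp⟩
  · -- k = 0, n = 1
    have hnd : ¬ inDelta S (F k) (F (k+1)) := by
      intro hd
      have hg0 : (G 0).1 + 1 = n := by
        have h0 := hc.hG.1 0 (by omega) (by omega)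
        omega
      have hend : F 0 = gammaS S t := ltPlus_topdim hc.hS hc.hn hc.ht hl hg0
      refine not_inGammaS_and_inDelta hc.hS (x := F k) (q := F (k+1)) ⟨?_, ?_⟩ hd
      · rw [hFt, hc.ht]; omega
      · rw [hFt, hk0]; exact hend.symm
    rw [← he, sgnSeg_succ, if_neg hnd, hk0]
    rfl
  all_goals {
    have hm1 : k - 1 + 1 = k := by omega
    have hbd1 : inBoundary S (F (k-1)) (F k) := by
      have := hc.hF.2 (k-1) (by omega) (by omega)
      rwa [hm1] at this
    have hbd2 : inBoundary S (F k) t := by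
      have := hc.hF.2 k (by omega) (by omega)
      rwa [hFt] at this
    have hydim : (F k).1 + 1 = n := by
      have := hc.hF.1 k (by omega) (by omega)
      omega
    have hstep1 : sgnSeg S 0 F k = if inDelta S (F (k-1)) (F k)
        then -(sgnSeg S 0 F (k-1)) else sgnSeg S 0 F (k-1) := by
      conv_lhs => rw [← hm1]
      rw [sgnSeg_succ, hm1]
    have hne' : G k ≠ F k := Ne.symm hc.hne
    first
    | · -- σ = 1 case
        have hzbd : inBoundary S (F (k-1)) (G k) := (pencilLt_bd hp).2
        have hnotmax : ¬ ((inDelta S (F (k-1)) (F k) ∧ inGammaS S (F k) t) ∨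
            (inGammaS S (F (k-1)) (F k) ∧ inDelta S (F k) t)) := fun hcomb =>
          pencilLt_asymm hc.hS hp
            (top_max hc.hS hc.hn hc.ht hydim hcomb (G k) hzbd hne')
        rcases hbd1 with hg1 | hd1 <;> rcases hbd2 with hg2 | hd2
        · have hn1 : ¬ inDelta S (F (k-1)) (F k) :=
            fun h => not_inGammaS_and_inDelta hc.hS hg1 h
          have hn2 : ¬ inDelta S (F k) (F (k+1)) := by
            rw [hFt]; exact fun h => not_inGammaS_and_inDelta hc.hS hg2 h
          rw [← he, sgnSeg_succ, if_neg hn2, hstep1, if_neg hn1, hσ]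
        · exact absurd (Or.inr ⟨hg1, hd2⟩) hnotmax
        · exact absurd (Or.inl ⟨hd1, hg2⟩) hnotmax
        · have hd2' : inDelta S (F k) (F (k+1)) := by rw [hFt]; exact hd2
          rw [← he, sgnSeg_succ, if_pos hd2', hstep1, if_pos hd1, hσ]
          norm_num
    | · -- σ = -1 case
        have hzbd : inBoundary S (F (k-1)) (G k) := (pencilLt_bd hp).1
        have hnotmin : ¬ ((inDelta S (F (k-1)) (F k) ∧ inDelta S (F k) t) ∨
            (inGammaS S (F (k-1)) (F k) ∧ inGammaS S (F k) t)) := fun hcomb =>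
          pencilLt_asymm hc.hS hp
            (top_min hc.hS hc.hn hc.ht hydim hcomb (G k) hzbd hne')
        rcases hbd1 with hg1 | hd1 <;> rcases hbd2 with hg2 | hd2
        · exact absurd (Or.inr ⟨hg1, hg2⟩) hnotmin
        · have hd2' : inDelta S (F k) (F (k+1)) := by rw [hFt]; exact hd2
          have hn1 : ¬ inDelta S (F (k-1)) (F k) :=
            fun h => not_inGammaS_and_inDelta hc.hS hg1 h
          rw [← he, sgnSeg_succ, if_pos hd2', hstep1, if_neg hn1, hσ]
          norm_num
        · have hn2 : ¬ inDelta S (F k) (F (k+1)) := by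
            rw [hFt]; exact fun h => not_inGammaS_and_inDelta hc.hS hg2 h
          rw [← he, sgnSeg_succ, if_neg hn2, hstep1, if_pos hd1, hσ]
          norm_num
        · exact absurd (Or.inl ⟨hd1, hd2⟩) hnotmin }

end Ctx
end Dev8

section Dev9
variable {S : PHg}

/-- Single-step γ-monotonicity: if `a ∈ δβ` then `γa ⊴ γγβ`. -/
lemma gamma_mono_single (hS : IsOpetope S) {a β : S.FaceS} (h : inDelta S a β)
    (hd : 2 ≤ β.1) :
    gammaS S a = gammaS S (gammaS S β) ∨ ltPlus S (gammaS S a) (gammaS S (gammaS S β)) := by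
  have hwf := wf_up S hS
  have key : ∀ z : S.FaceS, (∃ a', inDelta S a' β ∧ gammaS S a' = z) →
      z = gammaS S (gammaS S β) ∨ ltPlus S z (gammaS S (gammaS S β)) := by
    intro z
    induction z using hwf.induction with
    | _ z ih =>
      rintro ⟨a', ha', rfl⟩
      by_cases hz : gammaS S a' ∈ {x' | ∃ y', inDelta S y' β ∧ inDelta S x' y'}
      · obtain ⟨u3, hu3, hmem⟩ := hz
        have hcov : covPlus S (gammaS S a') (gammaS S u3) := ⟨u3, hmem, rfl⟩
        have hlt : ltPlus S (gammaS S a') (gammaS S u3) := Relation.TransGen.single hcov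
        rcases ih (gammaS S u3) hlt ⟨u3, hu3, rfl⟩ with he | hlt2
        · exact Or.inr (he ▸ hlt)
        · exact Or.inr (ltPlus_trans hlt hlt2)
      · have hglob := hS.glob_gamma β hd
        have : gammaS S a' ∈ ({gammaS S (gammaS S β)} : Set S.FaceS) := by
          rw [hglob]; exact ⟨⟨a', ha', rfl⟩, hz⟩
        exact Or.inl this
  exact key (gammaS S a) ⟨a, h, rfl⟩

/-- γ-monotonicity along `<⁺`. -/
lemma gamma_mono (hS : IsOpetope S) {a b : S.FaceS} (h : ltPlus S a b) (hd : 1 ≤ a.1) :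
    gammaS S a = gammaS S b ∨ ltPlus S (gammaS S a) (gammaS S b) := by
  induction h with
  | single hcov =>
    obtain ⟨β, hδ, hγ⟩ := hcov
    have hβd : 2 ≤ β.1 := by have := inDelta_dim hδ; omega
    have := gamma_mono_single hS hδ hβd
    rwa [hγ] at this
  | tail h1 hcov ih =>
    obtain ⟨β, hδ, hγ⟩ := hcov
    have hcd : 2 ≤ β.1 := by
      have := inDelta_dim hδ
      have := ltPlus_dim h1
      omega
    have h2 := gamma_mono_single hS hδ hcd
    rw [hγ] at h2
    rcases ih with he | hlt <;> rcases h2 with he2 | hlt2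
    · exact Or.inl (he.trans he2)
    · exact Or.inr (he ▸ hlt2)
    · exact Or.inr (he2 ▸ hlt)
    · exact Or.inr (ltPlus_trans hlt hlt2)

lemma ltPlus_head {a b : S.FaceS} (h : ltPlus S a b) :
    ∃ c, covPlus S a c ∧ (c = b ∨ ltPlus S c b) := by
  induction h with
  | single hcov => exact ⟨_, hcov, Or.inl rfl⟩
  | tail h1 hcov ih =>
    obtain ⟨c, hc1, hc2⟩ := ih
    rcases hc2 with rfl | hlt
    · exact ⟨c, hc1, Or.inr (Relation.TransGen.single hcov)⟩
    · exact ⟨c, hc1, Or.inr (Relation.TransGen.tail hlt hcov)⟩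

lemma ltPlus_gamma_image {a b : S.FaceS} (h : ltPlus S a b) : ∃ β, inGammaS S b β := by
  have : ∀ {c d : S.FaceS}, covPlus S c d → ∃ β, inGammaS S d β := by
    rintro c d ⟨β, hδ, hγ⟩
    have : 0 < β.1 := by have := inDelta_dim hδ; omega
    exact ⟨β, this, hγ⟩
  induction h with
  | single hcov => exact this hcov
  | tail _ hcov _ => exact this hcov

lemma ltPlus_delta_image {a b : S.FaceS} (h : ltPlus S a b) : ∃ β, inDelta S a β := by
  have : ∀ {c d : S.FaceS}, covPlus S c d → ∃ β, inDelta S c β := by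
    rintro c d ⟨β, hδ, _⟩
    exact ⟨β, hδ⟩
  induction h with
  | single hcov => exact this hcov
  | tail h1 _ ih => exact ih

end Dev9

section Dev10
variable {S : PHg}

/-- Between two δ-type pencil elements with no element strictly between, there is a
one-step sector. -/
lemma onestep_dd (hS : IsOpetope S) {x₀ a b : S.FaceS} (hk : 1 ≤ a.1)
    (hda : inDelta S x₀ a) (hdb : inDelta S x₀ b) (hab : ltPlus S a b)
    (hnb : ∀ z, inBoundary S x₀ z → ¬ (pencilLt S x₀ a z ∧ pencilLt S x₀ z b)) :
    ∃ α, inDelta S a α ∧ gammaS S α = b := by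
  obtain ⟨r, ⟨α₀, haα, hγα⟩, hr⟩ := ltPlus_head hab
  have hα₀d : 2 ≤ α₀.1 := by have := inDelta_dim haα; omega
  have hglob := hS.glob_delta α₀ hα₀d
  by_cases hcg : x₀ ∈ {x' | ∃ y', inDelta S y' α₀ ∧ gammaS S y' = x'}
  · obtain ⟨p₂, hp₂α, hp₂γ⟩ := hcg
    exfalso
    have hp₂dim : 0 < p₂.1 := by have := inDelta_dim hp₂α; omega
    have hcm : covMinus S p₂ b := ⟨hp₂dim, by rw [hp₂γ]; exact hdb⟩
    have h1 : ltPlus S p₂ r :=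
      Relation.TransGen.single (⟨α₀, hp₂α, hγα⟩ : covPlus S p₂ r)
    have h2 : ltPlus S p₂ b := by
      rcases hr with rfl | hr
      · exact h1
      · exact ltPlus_trans h1 hr
    exact hS.disj p₂ b hp₂dim ⟨Or.inl (Relation.TransGen.single hcm), Or.inl h2⟩
  · have hxr : x₀ ∈ {x' | inDelta S x' (gammaS S α₀)} := by
      rw [hglob]
      exact ⟨⟨a, haα, hda⟩, hcg⟩
    rw [hγα] at hxr
    rcases hr with rfl | hr
    · exact ⟨α₀, haα, hγα⟩
    · exact (hnb r (Or.inr hxr)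
        ⟨Or.inr (Or.inl ⟨hda, hxr, Relation.TransGen.single (⟨α₀, haα, hγα⟩ : covPlus S a r)⟩),
         Or.inr (Or.inl ⟨hxr, hdb, hr⟩)⟩).elim

/-- Between two γ-type pencil elements with no γ-type element strictly between,
there is a one-step sector. -/
lemma onestep_gg (hS : IsOpetope S) {x₀ a b : S.FaceS} (hk : 1 ≤ a.1)
    (hga : inGammaS S x₀ a) (hgb : inGammaS S x₀ b) (hab : ltPlus S a b)
    (hnb : ∀ z, inGammaS S x₀ z → ltPlus S a z → ltPlus S z b → False) :
    ∃ α, inDelta S a α ∧ gammaS S α = b := by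
  obtain ⟨r, ⟨α₀, haα, hγα⟩, hr⟩ := ltPlus_head hab
  have hα₀d : 2 ≤ α₀.1 := by have := inDelta_dim haα; omega
  have hglob := hS.glob_gamma α₀ hα₀d
  by_cases hcg : x₀ ∈ {x' | ∃ y', inDelta S y' α₀ ∧ inDelta S x' y'}
  · obtain ⟨y, hyα, hxy⟩ := hcg
    exfalso
    have habd := ltPlus_dim hab
    have hbdim : 0 < b.1 := by omega
    have hcm : covMinus S b y := ⟨hbdim, by rw [hgb.2]; exact hxy⟩
    have h1 : ltPlus S y r :=
      Relation.TransGen.single (⟨α₀, hyα, hγα⟩ : covPlus S y r)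
    have h2 : ltPlus S y b := by
      rcases hr with rfl | hr
      · exact h1
      · exact ltPlus_trans h1 hr
    exact hS.disj b y hbdim ⟨Or.inl (Relation.TransGen.single hcm), Or.inr h2⟩
  · have hxr : x₀ ∈ ({gammaS S (gammaS S α₀)} : Set S.FaceS) := by
      rw [hglob]
      exact ⟨⟨a, haα, hga.2⟩, hcg⟩
    rw [Set.mem_singleton_iff, hγα] at hxr
    have hrdim : 0 < r.1 := by
      have := ltPlus_dim (Relation.TransGen.single (⟨α₀, haα, hγα⟩ : covPlus S a r))
      omega
    rcases hr with rfl | hr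
    · exact ⟨α₀, haα, hγα⟩
    · exact (hnb r ⟨hrdim, hxr.symm⟩ (Relation.TransGen.single ⟨α₀, haα, hγα⟩) hr).elim

/-- Pullback along the one-step sector, δ-type case: the minimal
pencil element over `a` has codomain `b`. -/
lemma pullback_dd (hS : IsOpetope S) {x₀ a b u : S.FaceS} (hk : 1 ≤ a.1)
    (hda : inDelta S x₀ a) (hdb : inDelta S x₀ b) (hab : ltPlus S a b)
    (hnb : ∀ z, inBoundary S x₀ z → ¬ (pencilLt S x₀ a z ∧ pencilLt S x₀ z b))
    (hu : inDelta S a u)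
    (hnob : ∀ z, inBoundary S a z → ¬ pencilLt S a z u) :
    gammaS S u = b := by
  obtain ⟨α, hαd, hαγ⟩ := onestep_dd hS hk hda hdb hab hnb
  rcases hS.pencil_delta a u α hu hαd with rfl | huα | hαu
  · exact hαγ
  · -- u <⁺ α: γ-monotonicity
    rcases gamma_mono hS huα (by have := inDelta_dim hu; omega) with he | hlt
    · rw [he, hαγ]
    · exfalso
      rw [hαγ] at hlt
      -- γu <⁺ b; now use globularity of u
      have hud : 2 ≤ u.1 := by have := inDelta_dim hu; have := inDelta_dim hda; omega
      have hglob := hS.glob_delta u hud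
      have hcovau : covPlus S a (gammaS S u) := ⟨u, hu, rfl⟩
      by_cases hcg : x₀ ∈ {x' | ∃ y', inDelta S y' u ∧ gammaS S y' = x'}
      · obtain ⟨p₂, hp₂u, hp₂γ⟩ := hcg
        have hp₂dim : 0 < p₂.1 := by have := inDelta_dim hp₂u; omega
        have hcm : covMinus S p₂ b := ⟨hp₂dim, by rw [hp₂γ]; exact hdb⟩
        have h2 : ltPlus S p₂ b :=
          ltPlus_trans (Relation.TransGen.single (⟨u, hp₂u, rfl⟩ : covPlus S p₂ (gammaS S u))) hlt
        exact hS.disj p₂ b hp₂dim ⟨Or.inl (Relation.TransGen.single hcm), Or.inl h2⟩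
      · have hxr : x₀ ∈ {x' | inDelta S x' (gammaS S u)} := by
          rw [hglob]
          exact ⟨⟨a, hu, hda⟩, hcg⟩
        exact hnb (gammaS S u) (Or.inr hxr)
          ⟨Or.inr (Or.inl ⟨hda, hxr, Relation.TransGen.single hcovau⟩),
           Or.inr (Or.inl ⟨hxr, hdb, hlt⟩)⟩
  · exact absurd (Or.inr (Or.inl ⟨hαd, hu, hαu⟩)) (hnob α (Or.inr hαd))

/-- Pullback along the one-step sector, γ-type case. -/
lemma pullback_gg (hS : IsOpetope S) {x₀ a b u : S.FaceS} (hk : 1 ≤ a.1)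
    (hga : inGammaS S x₀ a) (hgb : inGammaS S x₀ b) (hab : ltPlus S a b)
    (hnb : ∀ z, inGammaS S x₀ z → ltPlus S a z → ltPlus S z b → False)
    (hu : inDelta S a u)
    (hnob : ∀ z, inBoundary S a z → ¬ pencilLt S a z u) :
    gammaS S u = b := by
  obtain ⟨α, hαd, hαγ⟩ := onestep_gg hS hk hga hgb hab hnb
  rcases hS.pencil_delta a u α hu hαd with rfl | huα | hαu
  · exact hαγ
  · rcases gamma_mono hS huα (by have := inDelta_dim hu; omega) with he | hlt
    · rw [he, hαγ]
    · exfalso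
      rw [hαγ] at hlt
      have hud : 2 ≤ u.1 := by have := inDelta_dim hu; omega
      have hglob := hS.glob_gamma u hud
      have hcovau : covPlus S a (gammaS S u) := ⟨u, hu, rfl⟩
      by_cases hcg : x₀ ∈ {x' | ∃ y', inDelta S y' u ∧ inDelta S x' y'}
      · obtain ⟨y, hyu, hxy⟩ := hcg
        have habd := ltPlus_dim hab
        have hbdim : 0 < b.1 := by
          have := inGammaS_dim hgb; omega
        have hcm : covMinus S b y := ⟨hbdim, by rw [hgb.2]; exact hxy⟩
        have h2 : ltPlus S y b :=
          ltPlus_trans (Relation.TransGen.single (⟨u, hyu, rfl⟩ : covPlus S y (gammaS S u))) hlt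
        exact hS.disj b y hbdim ⟨Or.inl (Relation.TransGen.single hcm), Or.inr h2⟩
      · have hxr : x₀ ∈ ({gammaS S (gammaS S u)} : Set S.FaceS) := by
          rw [hglob]
          exact ⟨⟨a, hu, hga.2⟩, hcg⟩
        rw [Set.mem_singleton_iff] at hxr
        have hrdim : 0 < (gammaS S u).1 := by
          have := covPlus_dim hcovau
          omega
        exact hnb (gammaS S u) ⟨hrdim, hxr.symm⟩ (Relation.TransGen.single hcovau) hlt
  · exact absurd (Or.inr (Or.inl ⟨hαd, hu, hαu⟩)) (hnob α (Or.inr hαd))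
end Dev10

section Dev11
variable {S : PHg}

/-- Two distinct non-codomain faces sharing a pencil point (δ-type) are impossible. -/
lemma win_delta (hS : IsOpetope S) {B W₁ W₂ : S.FaceS} (h1 : inDelta S B W₁)
    (h2 : inDelta S B W₂) (hne : W₁ ≠ W₂)
    (hng1 : ∀ w, ¬ inGammaS S W₁ w) (hng2 : ∀ w, ¬ inGammaS S W₂ w) : False := by
  rcases hS.pencil_delta B W₁ W₂ h1 h2 with he | hp | hp
  · exact hne he
  · obtain ⟨β, hβ⟩ := ltPlus_gamma_image hp
    exact hng2 β hβ
  · obtain ⟨β, hβ⟩ := ltPlus_gamma_image hp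
    exact hng1 β hβ

/-- Two distinct non-codomain faces sharing a pencil point (γ-type) are impossible. -/
lemma win_gamma (hS : IsOpetope S) {B W₁ W₂ : S.FaceS} (h1 : inGammaS S B W₁)
    (h2 : inGammaS S B W₂) (hne : W₁ ≠ W₂)
    (hng1 : ∀ w, ¬ inGammaS S W₁ w) (hng2 : ∀ w, ¬ inGammaS S W₂ w) : False := by
  rcases hS.pencil_gamma B W₁ W₂ h1 h2 with he | hp | hp
  · exact hne he
  · obtain ⟨β, hβ⟩ := ltPlus_gamma_image hp
    exact hng2 β hβ
  · obtain ⟨β, hβ⟩ := ltPlus_gamma_image hp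
    exact hng1 β hβ

/-- Finishing the gap analysis: both-δ-spoke configuration. -/
lemma kill_dd (hS : IsOpetope S) {x₀ a b u v : S.FaceS} (hk1 : 1 ≤ a.1)
    (hda : inDelta S x₀ a) (hdb : inDelta S x₀ b) (hab : ltPlus S a b)
    (hnb : ∀ z, inBoundary S x₀ z → ¬ (pencilLt S x₀ a z ∧ pencilLt S x₀ z b))
    (hu : inDelta S a u)
    (hnobu : ∀ z, inBoundary S a z → ¬ pencilLt S a z u)
    (hgv : inGammaS S b v)
    (hngu : ∀ w, ¬ inGammaS S u w) (hngv : ∀ w, ¬ inGammaS S v w)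
    (hne : u ≠ v) : False := by
  have hγu : gammaS S u = b := pullback_dd hS hk1 hda hdb hab hnb hu hnobu
  have hud : 0 < u.1 := by have := inDelta_dim hu; omega
  exact win_gamma hS ⟨hud, hγu⟩ hgv hne hngu hngv

/-- Finishing the gap analysis: both-γ-spoke configuration. -/
lemma kill_gg (hS : IsOpetope S) {x₀ a b u v : S.FaceS} (hk1 : 1 ≤ a.1)
    (hga : inGammaS S x₀ a) (hgb : inGammaS S x₀ b) (hab : ltPlus S a b)
    (hnb : ∀ z, inGammaS S x₀ z → ltPlus S a z → ltPlus S z b → False)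
    (hu : inDelta S a u)
    (hnobu : ∀ z, inBoundary S a z → ¬ pencilLt S a z u)
    (hgv : inGammaS S b v)
    (hngu : ∀ w, ¬ inGammaS S u w) (hngv : ∀ w, ¬ inGammaS S v w)
    (hne : u ≠ v) : False := by
  have hγu : gammaS S u = b := pullback_gg hS hk1 hga hgb hab hnb hu hnobu
  have hud : 0 < u.1 := by have := inDelta_dim hu; omega
  exact win_gamma hS ⟨hud, hγu⟩ hgv hne hngu hngv

/-- Finishing the gap analysis at level `k = 0`. -/
lemma kill_00 (hS : IsOpetope S) {p q u v : S.FaceS}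
    (hqp : ltPlus S q p)
    (hnb0 : ∀ y : S.FaceS, y.1 = 0 → ¬ (ltPlus S y p ∧ ltPlus S q y))
    (hgu : inGammaS S p u) (hqv : inDelta S q v)
    (hnobv : ∀ z, inBoundary S q z → ¬ pencilLt S q z v)
    (hngu : ∀ w, ¬ inGammaS S u w) (hngv : ∀ w, ¬ inGammaS S v w)
    (hne : u ≠ v) (hp0 : p.1 = 0) : False := by
  have hq0 : q.1 = 0 := by have := ltPlus_dim hqp; omega
  -- one-step sector from q to p
  obtain ⟨r, hcov, hr⟩ := ltPlus_head hqp
  obtain ⟨α₀, hqα, hγα⟩ := hcov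
  have hrp : r = p := by
    rcases hr with rfl | hr
    · rfl
    · exact ((hnb0 r (by have := covPlus_dim (⟨α₀, hqα, hγα⟩ : covPlus S q r); omega)
        ⟨hr, Relation.TransGen.single ⟨α₀, hqα, hγα⟩⟩)).elim
  have hγα' : gammaS S α₀ = p := by rw [hγα, hrp]
  -- v vs α₀ in the pencil over q
  have hγv : gammaS S v = p := by
    rcases hS.pencil_delta q v α₀ hqv hqα with he | hvα | hαv
    · rw [he, hγα']
    · rcases gamma_mono hS hvα (by have := inDelta_dim hqv; omega) with he | hlt
      · rw [he, hγα']
      · exfalso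
        rw [hγα'] at hlt
        refine hnb0 (gammaS S v) ?_ ⟨hlt, Relation.TransGen.single ⟨v, hqv, rfl⟩⟩
        have := covPlus_dim (⟨v, hqv, rfl⟩ : covPlus S q (gammaS S v))
        omega
    · exact ((hnobv α₀ (Or.inr hqα)) (Or.inr (Or.inl ⟨hqα, hqv, hαv⟩))).elim
  have hvd : 0 < v.1 := by have := inDelta_dim hqv; omega
  exact win_gamma hS hgu ⟨hvd, hγv⟩ hne hngu hngv

end Dev11

section Dev12
variable {S : PHg}

/-- Bridge: a `<⁺`-chain one dimension down induces a `<⁻`-chain. -/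
lemma ltMinus_bridge {S : PHg} {a b : S.FaceS} (h : ltPlus S a b) :
    ∀ {P Q : S.FaceS}, gammaS S P = a → 0 < P.1 → inDelta S b Q → ltMinus S P Q := by
  induction h with
  | single hcov =>
    intro P Q hP hPd hQ
    obtain ⟨ξ, haξ, hγξ⟩ := hcov
    have hξd : 0 < ξ.1 := by have := inDelta_dim haξ; omega
    have h1 : covMinus S P ξ := ⟨hPd, by rw [hP]; exact haξ⟩
    have h2 : covMinus S ξ Q := ⟨hξd, by rw [hγξ]; exact hQ⟩
    exact Relation.TransGen.tail (Relation.TransGen.single h1) h2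
  | tail h' hcov ih =>
    intro P Q hP hPd hQ
    obtain ⟨ξ, hcξ, hγξ⟩ := hcov
    have hξd : 0 < ξ.1 := by have := inDelta_dim hcξ; omega
    have h2 : covMinus S ξ Q := ⟨hξd, by rw [hγξ]; exact hQ⟩
    exact Relation.TransGen.tail (ih hP hPd hcξ) h2

/-- The remaining mixed-type configuration is impossible. -/
lemma hole_mixed {S : PHg} (hS : IsOpetope S) {x₀ A B U V C : S.FaceS}
    (hdA : inDelta S x₀ A) (hgB : inGammaS S x₀ B)
    (hAU : inDelta S A U) (hBV : inDelta S B V) (hUV : U ≠ V)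
    (hngU : ∀ w, ¬ inGammaS S U w) (hngV : ∀ w, ¬ inGammaS S V w)
    (hnobU : ∀ z, inBoundary S A z → ¬ pencilLt S A z U)
    (hnobV : ∀ z, inBoundary S B z → ¬ pencilLt S B z V)
    (hnb : ∀ z, inBoundary S x₀ z → ¬ (pencilLt S x₀ A z ∧ pencilLt S x₀ z B))
    (hC : inDelta S C U) (hgC : inGammaS S x₀ C) (hCB : ltPlus S C B) : False := by
  have hdAx : A.1 = x₀.1 + 1 := (inDelta_dim hdA).symm
  have hdBx : B.1 = x₀.1 + 1 := (inGammaS_dim hgB).symm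
  have hdCx : C.1 = x₀.1 + 1 := (inGammaS_dim hgC).symm
  have hdU : U.1 = x₀.1 + 2 := by have := inDelta_dim hAU; omega
  -- x₀ is not γγU
  have hxne : x₀ ≠ gammaS S (gammaS S U) := by
    intro he
    have hglob := hS.glob_gamma U (by omega)
    have : x₀ ∈ ({gammaS S (gammaS S U)} : Set S.FaceS) := by
      rw [Set.mem_singleton_iff]; exact he
    rw [hglob] at this
    exact this.2 ⟨A, hAU, hdA⟩
  -- A <⁺ γU
  have hAγU : ltPlus S A (gammaS S U) := Relation.TransGen.single ⟨U, hAU, rfl⟩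
  -- no perpPlus between B and A
  have hcovBA : covMinus S B A := ⟨by omega, by rw [hgB.2]; exact hdA⟩
  -- one-step sector from C with a γ-type target spoke
  obtain ⟨r, ⟨ω, hCω, hγω⟩, hr⟩ := ltPlus_head hCB
  have hrB : ltPlus S r B ∨ r = B := by
    rcases hr with rfl | hr
    · exact Or.inr rfl
    · exact Or.inl hr
  have hωd : 2 ≤ ω.1 := by have := inDelta_dim hCω; omega
  have hglobω := hS.glob_gamma ω hωd
  have hγr : gammaS S r = x₀ := by
    by_cases hcg : x₀ ∈ {x' | ∃ y', inDelta S y' ω ∧ inDelta S x' y'}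
    · exfalso
      obtain ⟨y, hyω, hx₀y⟩ := hcg
      have hyB : ltPlus S y B := by
        have h1 : ltPlus S y r := Relation.TransGen.single ⟨ω, hyω, hγω⟩
        rcases hrB with hr2 | rfl
        · exact ltPlus_trans h1 hr2
        · exact h1
      rcases hS.pencil_delta x₀ y A hx₀y hdA with he | hyA | hAy
      · -- A ∈ δω, so A <⁺ B
        rw [he] at hyω
        have hAB : ltPlus S A B := by
          have h1 : ltPlus S A r := Relation.TransGen.single ⟨ω, hyω, hγω⟩
          rcases hrB with hr2 | rfl
          · exact ltPlus_trans h1 hr2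
          · exact h1
        exact hS.disj B A (by omega)
          ⟨Or.inl (Relation.TransGen.single hcovBA), Or.inr hAB⟩
      · -- y <⁺ A : disjointness of B and y
        have hcovBy : covMinus S B y := ⟨by omega, by rw [hgB.2]; exact hx₀y⟩
        exact hS.disj B y (by omega)
          ⟨Or.inl (Relation.TransGen.single hcovBy), Or.inr hyB⟩
      · -- A <⁺ y : strictly between
        exact hnb y (Or.inr hx₀y)
          ⟨Or.inr (Or.inl ⟨hdA, hx₀y, hAy⟩), Or.inl ⟨hgB, hx₀y⟩⟩
    · have : x₀ ∈ ({gammaS S (gammaS S ω)} : Set S.FaceS) := by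
        rw [hglobω]
        exact ⟨⟨C, hCω, hgC.2⟩, hcg⟩
      rw [Set.mem_singleton_iff, hγω] at this
      exact this.symm
  -- U versus the sector ω, over the common point C
  rcases hS.pencil_delta C U ω hC hCω with rfl | hUω | hωU
  · -- U = ω : γγU = x₀
    exact hxne (by rw [hγω, hγr])
  · -- U <⁺ ω
    have hγUr : gammaS S U = r ∨ ltPlus S (gammaS S U) r := by
      have := gamma_mono hS hUω (by omega)
      rwa [hγω] at this
    rcases hγUr with he | hlt
    · exact hxne (by rw [he, hγr])
    · have hγγ : gammaS S (gammaS S U) = x₀ ∨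
          ltPlus S (gammaS S (gammaS S U)) x₀ := by
        have hd1 : 1 ≤ (gammaS S U).1 := by
          have := gammaS_dim (S := S) (q := U) (by omega)
          omega
        have := gamma_mono hS hlt hd1
        rwa [hγr] at this
      rcases hγγ with he | hlt2
      · exact hxne he.symm
      · -- the bridge contradiction
        have hbr : ltMinus S (gammaS S U) A :=
          ltMinus_bridge hlt2 rfl (by
            have := gammaS_dim (S := S) (q := U) (by omega)
            omega) hdA
        exact hS.disj (gammaS S U) A (by
            have := gammaS_dim (S := S) (q := U) (by omega)
            omega)
          ⟨Or.inl hbr, Or.inr hAγU⟩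
  · -- ω <⁺ U : U would be a codomain
    obtain ⟨β, hβ⟩ := ltPlus_gamma_image hωU
    exact hngU β hβ

lemma sgnSeg_at (F : ℕ → S.FaceS) {k : ℕ} (hkp : 0 < k) :
    sgnSeg S 0 F k = if inDelta S (F (k-1)) (F k) then -(sgnSeg S 0 F (k-1))
      else sgnSeg S 0 F (k-1) := by
  have hm1 : k - 1 + 1 = k := by omega
  conv_lhs => rw [← hm1]
  rw [sgnSeg_succ, hm1]

namespace Ctx
variable {n : ℕ} {t : S.FaceS} {F G : ℕ → S.FaceS} {k : ℕ}

/-- THE GAP: the two consecutive flags also agree at level `k+1`. -/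
lemma gap (hc : Ctx S n t F G k) : F (k+1) = G (k+1) := by
  by_contra hne2
  have hS := hc.hS
  have hk1n : k + 1 < n := by
    have h2 := hc.knen
    rcases Nat.lt_or_ge (k+1) n with h | h
    · exact h
    · exact absurd (by rw [show k+1 = n by omega, hc.hFt, hc.hGt]) hne2
  have hdFk : (F k).1 = k := hc.hF.1 k (by omega) (by omega)
  have hdGk : (G k).1 = k := hc.hG.1 k (by omega) (by omega)
  have hdFk1 : (F (k+1)).1 = k+1 := hc.hF.1 (k+1) (by omega) (by omega)
  have hdGk1 : (G (k+1)).1 = k+1 := hc.hG.1 (k+1) (by omega) (by omega)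
  have hbdu : inBoundary S (F k) (F (k+1)) := hc.hF.2 k (by omega) (by omega)
  have hbdv : inBoundary S (G k) (G (k+1)) := hc.hG.2 k (by omega) (by omega)
  have hnoF : ∀ y, inBoundary S (F k) y →
      (sgnSeg S 0 F k = 1 → ¬ pencilLt S (F k) (F (k+1)) y) ∧
      (sgnSeg S 0 F k = -1 → ¬ pencilLt S (F k) y (F (k+1))) := by
    intro y hy
    have h := hc.noF (m0 := k+1) (by omega) hk1n (y := y) (by simpa using hy)
    simpa using h
  have hnoG : ∀ y, inBoundary S (G k) y →
      (sgnSeg S 0 G k = 1 → ¬ pencilLt S (G k) y (G (k+1))) ∧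
      (sgnSeg S 0 G k = -1 → ¬ pencilLt S (G k) (G (k+1)) y) := by
    intro y hy
    have h := hc.noG (m0 := k+1) (by omega) hk1n (y := y) (by simpa using hy)
    simpa using h
  rcases hc.hcase with ⟨hk0, hl⟩ | ⟨hkp, hs, hp⟩ | ⟨hkp, hs, hp⟩
  · -- k = 0
    subst hk0
    have hσF : sgnSeg S 0 F 0 = 1 := rfl
    have hσG : sgnSeg S 0 G 0 = 1 := rfl
    have hNAF : ∀ z, inBoundary S (F 0) z → ¬ pencilLt S (F 0) (F 1) z :=
      fun z hz => (hnoF z hz).1 hσF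
    have hNBG : ∀ z, inBoundary S (G 0) z → ¬ pencilLt S (G 0) z (G 1) :=
      fun z hz => (hnoG z hz).1 hσG
    have hγu : inGammaS S (F 0) (F 1) := by
      rcases hbdu with hγ | hδ
      · exact hγ
      · exfalso
        obtain ⟨β, hβ⟩ := ltPlus_gamma_image hl
        exact max_delta_pure hS hδ hNAF β hβ
    have hδv : inDelta S (G 0) (G 1) := by
      rcases hbdv with hγ | hδ
      · exfalso
        obtain ⟨β, hβ⟩ := ltPlus_delta_image hl
        exact min_gamma_pure hS hγ hNBG β hβ
      · exact hδ
    have hngu : ∀ w, ¬ inGammaS S (F 1) w := fun w hw => mid_max_gamma hS hγu hNAF hw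
    have hngv : ∀ w, ¬ inGammaS S (G 1) w := fun w hw => mid_min_delta hS hδv hNBG hw
    exact kill_00 hS hl (fun y hy0 hpair => hc.noMid0 hy0 hpair) hγu hδv hNBG hngu hngv
      hne2 hdFk
  all_goals {
    have hGx : G (k-1) = F (k-1) := (hc.hagr (k-1) (by omega)).symm
    have hsG0 : sgnSeg S 0 G (k-1) = sgnSeg S 0 F (k-1) :=
      sgnSeg_congr (fun i hi => (hc.hagr i (by omega)).symm)
    have hsFat := sgnSeg_at F hkp
    have hsGat := sgnSeg_at G hkp
    rw [hGx, hsG0] at hsGat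
    have hnb1 : ∀ z, inBoundary S (F (k-1)) z →
        sgnSeg S 0 F (k-1) = 1 →
        ¬ (pencilLt S (F (k-1)) (F k) z ∧ pencilLt S (F (k-1)) z (G k)) :=
      fun z hz => (hc.noMid hkp (y := z) hz).1
    have hnb2 : ∀ z, inBoundary S (F (k-1)) z →
        sgnSeg S 0 F (k-1) = -1 →
        ¬ (pencilLt S (F (k-1)) (G k) z ∧ pencilLt S (F (k-1)) z (F k)) :=
      fun z hz => (hc.noMid hkp (y := z) hz).2
    first
    | -- s = 1 block
      rcases hp with ⟨hgq, hdp⟩ | ⟨hdp, hdq, hpq⟩ | ⟨hgp, hgq, hqp⟩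
      -- (1a)
      · have hσF : sgnSeg S 0 F k = -1 := by rw [hsFat, if_pos hdp, hs]
        have hσG : sgnSeg S 0 G k = 1 := by
          rw [hsGat, if_neg (fun hd => not_inGammaS_and_inDelta hS hgq hd), hs]
        have hNBF : ∀ z, inBoundary S (F k) z → ¬ pencilLt S (F k) z (F (k+1)) :=
          fun z hz => (hnoF z hz).2 hσF
        have hNBG : ∀ z, inBoundary S (G k) z → ¬ pencilLt S (G k) z (G (k+1)) :=
          fun z hz => (hnoG z hz).1 hσG
        have hδu : inDelta S (F k) (F (k+1)) := by
          rcases hbdu with hγ | hδ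
          · exfalso
            have hnd : nonDelta S (F k) := min_gamma_pure hS hγ hNBF
            have hpc : F k = cface S n t k :=
              eq_of_nonDelta hS (by rw [hdFk, cface_dim hc.ht (by omega)]) hnd
                (cm_main hS hc.hn hc.ht k (by omega)).1
            rcases (cm_main hS hc.hn hc.ht k (by omega)).2 (G k) hdGk with he | hlt
            · exact hc.hne (hpc.trans he.symm)
            · rw [← hpc] at hlt
              refine hS.disj (G k) (F k) (by omega)
                ⟨Or.inl (Relation.TransGen.single ⟨by omega, ?_⟩), Or.inl hlt⟩
              rw [hgq.2]; exact hdp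
          · exact hδ
        have hδv : inDelta S (G k) (G (k+1)) := by
          rcases hbdv with hγ | hδ
          · exfalso
            have hnd : nonDelta S (G k) := min_gamma_pure hS hγ hNBG
            have hpc : G k = cface S n t k :=
              eq_of_nonDelta hS (by rw [hdGk, cface_dim hc.ht (by omega)]) hnd
                (cm_main hS hc.hn hc.ht k (by omega)).1
            rcases (cm_main hS hc.hn hc.ht k (by omega)).2 (F k) hdFk with he | hlt
            · exact hc.hne (he.trans hpc.symm)
            · rw [← hpc] at hlt
              refine hS.disj (G k) (F k) (by omega)
                ⟨Or.inl (Relation.TransGen.single ⟨by omega, ?_⟩), Or.inr hlt⟩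
              rw [hgq.2]; exact hdp
          · exact hδ
        have hngu : ∀ w, ¬ inGammaS S (F (k+1)) w :=
          fun w hw => mid_min_delta hS hδu hNBF hw
        have hngv : ∀ w, ¬ inGammaS S (G (k+1)) w :=
          fun w hw => mid_min_delta hS hδv hNBG hw
        -- globularity analysis on F (k+1)
        have hglob := hS.glob_delta (F (k+1)) (by omega)
        by_cases hcg : F (k-1) ∈ {x' | ∃ y', inDelta S y' (F (k+1)) ∧ gammaS S y' = x'}
        · obtain ⟨C, hCu, hCγ⟩ := hcg
          have hCd : 0 < C.1 := by have := inDelta_dim hCu; omega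
          have hgC : inGammaS S (F (k-1)) C := ⟨hCd, hCγ⟩
          rcases hS.pencil_gamma (F (k-1)) C (G k) hgC hgq with he | hlt | hlt
          · exact win_delta hS (he ▸ hCu) hδv hne2 hngu hngv
          · -- ltPlus C (G k): the hole
            exact hole_mixed hS hdp hgq hδu hδv hne2 hngu hngv hNBF hNBG
              (fun z hz => hnb1 z hz hs) hCu hgC hlt
          · -- ltPlus (G k) C : strictly between
            exact hnb1 C (Or.inl hgC) hs
              ⟨Or.inl ⟨hgC, hdp⟩, Or.inr (Or.inr ⟨hgC, hgq, hlt⟩)⟩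
        · have hxr : F (k-1) ∈ {x' | inDelta S x' (gammaS S (F (k+1)))} := by
            rw [hglob]
            exact ⟨⟨F k, hδu, hdp⟩, hcg⟩
          refine hnb1 (gammaS S (F (k+1))) (Or.inr hxr) hs
            ⟨Or.inr (Or.inl ⟨hdp, hxr, Relation.TransGen.single ⟨F (k+1), hδu, rfl⟩⟩),
             Or.inl ⟨hgq, hxr⟩⟩
      -- (1b)
      · have hσF : sgnSeg S 0 F k = -1 := by rw [hsFat, if_pos hdp, hs]
        have hσG : sgnSeg S 0 G k = -1 := by rw [hsGat, if_pos hdq, hs]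
        have hNBF : ∀ z, inBoundary S (F k) z → ¬ pencilLt S (F k) z (F (k+1)) :=
          fun z hz => (hnoF z hz).2 hσF
        have hNAG : ∀ z, inBoundary S (G k) z → ¬ pencilLt S (G k) (G (k+1)) z :=
          fun z hz => (hnoG z hz).2 hσG
        have hδu : inDelta S (F k) (F (k+1)) := by
          rcases hbdu with hγ | hδ
          · exfalso
            obtain ⟨β, hβ⟩ := ltPlus_delta_image hpq
            exact min_gamma_pure hS hγ hNBF β hβ
          · exact hδ
        have hγv : inGammaS S (G k) (G (k+1)) := by
          rcases hbdv with hγ | hδ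
          · exact hγ
          · exfalso
            obtain ⟨β, hβ⟩ := ltPlus_gamma_image hpq
            exact max_delta_pure hS hδ hNAG β hβ
        have hngu : ∀ w, ¬ inGammaS S (F (k+1)) w :=
          fun w hw => mid_min_delta hS hδu hNBF hw
        have hngv : ∀ w, ¬ inGammaS S (G (k+1)) w :=
          fun w hw => mid_max_gamma hS hγv hNAG hw
        exact kill_dd hS (by omega) hdp hdq hpq (fun z hz => hnb1 z hz hs)
          hδu hNBF hγv hngu hngv hne2
      -- (1c)
      · have hσF : sgnSeg S 0 F k = 1 := by
          rw [hsFat, if_neg (fun hd => not_inGammaS_and_inDelta hS hgp hd), hs]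
        have hσG : sgnSeg S 0 G k = 1 := by
          rw [hsGat, if_neg (fun hd => not_inGammaS_and_inDelta hS hgq hd), hs]
        have hNAF : ∀ z, inBoundary S (F k) z → ¬ pencilLt S (F k) (F (k+1)) z :=
          fun z hz => (hnoF z hz).1 hσF
        have hNBG : ∀ z, inBoundary S (G k) z → ¬ pencilLt S (G k) z (G (k+1)) :=
          fun z hz => (hnoG z hz).1 hσG
        have hγu : inGammaS S (F k) (F (k+1)) := by
          rcases hbdu with hγ | hδ
          · exact hγ
          · exfalso
            obtain ⟨β, hβ⟩ := ltPlus_gamma_image hqp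
            exact max_delta_pure hS hδ hNAF β hβ
        have hδv : inDelta S (G k) (G (k+1)) := by
          rcases hbdv with hγ | hδ
          · exfalso
            obtain ⟨β, hβ⟩ := ltPlus_delta_image hqp
            exact min_gamma_pure hS hγ hNBG β hβ
          · exact hδ
        have hngu : ∀ w, ¬ inGammaS S (F (k+1)) w :=
          fun w hw => mid_max_gamma hS hγu hNAF hw
        have hngv : ∀ w, ¬ inGammaS S (G (k+1)) w :=
          fun w hw => mid_min_delta hS hδv hNBG hw
        refine kill_gg hS (by omega) hgq hgp hqp ?_ hδv hNBG hγu hngv hngu (Ne.symm hne2)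
        intro z hgz h1 h2
        exact hnb1 z (Or.inl hgz) hs ⟨Or.inr (Or.inr ⟨hgp, hgz, h2⟩),
          Or.inr (Or.inr ⟨hgz, hgq, h1⟩)⟩
    | -- s = -1 block
      rcases hp with ⟨hgp, hdq⟩ | ⟨hdq, hdp, hqp⟩ | ⟨hgq, hgp, hpq⟩
      -- (2a)
      · have hσF : sgnSeg S 0 F k = -1 := by
          rw [hsFat, if_neg (fun hd => not_inGammaS_and_inDelta hS hgp hd), hs]
        have hσG : sgnSeg S 0 G k = 1 := by rw [hsGat, if_pos hdq, hs]; norm_num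
        have hNBF : ∀ z, inBoundary S (F k) z → ¬ pencilLt S (F k) z (F (k+1)) :=
          fun z hz => (hnoF z hz).2 hσF
        have hNBG : ∀ z, inBoundary S (G k) z → ¬ pencilLt S (G k) z (G (k+1)) :=
          fun z hz => (hnoG z hz).1 hσG
        have hδu : inDelta S (F k) (F (k+1)) := by
          rcases hbdu with hγ | hδ
          · exfalso
            have hnd : nonDelta S (F k) := min_gamma_pure hS hγ hNBF
            have hpc : F k = cface S n t k :=
              eq_of_nonDelta hS (by rw [hdFk, cface_dim hc.ht (by omega)]) hnd
                (cm_main hS hc.hn hc.ht k (by omega)).1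
            rcases (cm_main hS hc.hn hc.ht k (by omega)).2 (G k) hdGk with he | hlt
            · exact hc.hne (hpc.trans he.symm)
            · rw [← hpc] at hlt
              refine hS.disj (F k) (G k) (by omega)
                ⟨Or.inl (Relation.TransGen.single ⟨by omega, ?_⟩), Or.inr hlt⟩
              rw [hgp.2]; exact hdq
          · exact hδ
        have hδv : inDelta S (G k) (G (k+1)) := by
          rcases hbdv with hγ | hδ
          · exfalso
            have hnd : nonDelta S (G k) := min_gamma_pure hS hγ hNBG
            have hpc : G k = cface S n t k :=
              eq_of_nonDelta hS (by rw [hdGk, cface_dim hc.ht (by omega)]) hnd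
                (cm_main hS hc.hn hc.ht k (by omega)).1
            rcases (cm_main hS hc.hn hc.ht k (by omega)).2 (F k) hdFk with he | hlt
            · exact hc.hne (he.trans hpc.symm)
            · rw [← hpc] at hlt
              refine hS.disj (F k) (G k) (by omega)
                ⟨Or.inl (Relation.TransGen.single ⟨by omega, ?_⟩), Or.inl hlt⟩
              rw [hgp.2]; exact hdq
          · exact hδ
        have hngu : ∀ w, ¬ inGammaS S (F (k+1)) w :=
          fun w hw => mid_min_delta hS hδu hNBF hw
        have hngv : ∀ w, ¬ inGammaS S (G (k+1)) w :=
          fun w hw => mid_min_delta hS hδv hNBG hw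
        -- globularity analysis on G (k+1)
        have hglob := hS.glob_delta (G (k+1)) (by omega)
        by_cases hcg : F (k-1) ∈ {x' | ∃ y', inDelta S y' (G (k+1)) ∧ gammaS S y' = x'}
        · obtain ⟨C, hCv, hCγ⟩ := hcg
          have hCd : 0 < C.1 := by have := inDelta_dim hCv; omega
          have hgC : inGammaS S (F (k-1)) C := ⟨hCd, hCγ⟩
          rcases hS.pencil_gamma (F (k-1)) C (F k) hgC hgp with he | hlt | hlt
          · exact win_delta hS (he ▸ hCv) hδu (Ne.symm hne2) hngv hngu
          · -- ltPlus C (F k): the hole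
            exact hole_mixed hS hdq hgp hδv hδu (Ne.symm hne2) hngv hngu hNBG hNBF
              (fun z hz => hnb2 z hz hs) hCv hgC hlt
          · exact hnb2 C (Or.inl hgC) hs
              ⟨Or.inl ⟨hgC, hdq⟩, Or.inr (Or.inr ⟨hgC, hgp, hlt⟩)⟩
        · have hxr : F (k-1) ∈ {x' | inDelta S x' (gammaS S (G (k+1)))} := by
            rw [hglob]
            refine ⟨⟨G k, hδv, ?_⟩, hcg⟩
            rw [← hGx] at hdq ⊢
            exact hdq
          refine hnb2 (gammaS S (G (k+1))) (Or.inr hxr) hs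
            ⟨Or.inr (Or.inl ⟨hdq, hxr, Relation.TransGen.single ⟨G (k+1), hδv, rfl⟩⟩),
             Or.inl ⟨hgp, hxr⟩⟩
      -- (2b)
      · have hσF : sgnSeg S 0 F k = 1 := by rw [hsFat, if_pos hdp, hs]; norm_num
        have hσG : sgnSeg S 0 G k = 1 := by rw [hsGat, if_pos hdq, hs]; norm_num
        have hNAF : ∀ z, inBoundary S (F k) z → ¬ pencilLt S (F k) (F (k+1)) z :=
          fun z hz => (hnoF z hz).1 hσF
        have hNBG : ∀ z, inBoundary S (G k) z → ¬ pencilLt S (G k) z (G (k+1)) :=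
          fun z hz => (hnoG z hz).1 hσG
        have hγu : inGammaS S (F k) (F (k+1)) := by
          rcases hbdu with hγ | hδ
          · exact hγ
          · exfalso
            obtain ⟨β, hβ⟩ := ltPlus_gamma_image hqp
            exact max_delta_pure hS hδ hNAF β hβ
        have hδv : inDelta S (G k) (G (k+1)) := by
          rcases hbdv with hγ | hδ
          · exfalso
            obtain ⟨β, hβ⟩ := ltPlus_delta_image hqp
            exact min_gamma_pure hS hγ hNBG β hβ
          · exact hδ
        have hngu : ∀ w, ¬ inGammaS S (F (k+1)) w :=
          fun w hw => mid_max_gamma hS hγu hNAF hw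
        have hngv : ∀ w, ¬ inGammaS S (G (k+1)) w :=
          fun w hw => mid_min_delta hS hδv hNBG hw
        exact kill_dd hS (by omega) hdq hdp hqp (fun z hz => hnb2 z hz hs)
          hδv hNBG hγu hngv hngu (Ne.symm hne2)
      -- (2c)
      · have hσF : sgnSeg S 0 F k = -1 := by
          rw [hsFat, if_neg (fun hd => not_inGammaS_and_inDelta hS hgp hd), hs]
        have hσG : sgnSeg S 0 G k = -1 := by
          rw [hsGat, if_neg (fun hd => not_inGammaS_and_inDelta hS hgq hd), hs]
        have hNBF : ∀ z, inBoundary S (F k) z → ¬ pencilLt S (F k) z (F (k+1)) :=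
          fun z hz => (hnoF z hz).2 hσF
        have hNAG : ∀ z, inBoundary S (G k) z → ¬ pencilLt S (G k) (G (k+1)) z :=
          fun z hz => (hnoG z hz).2 hσG
        have hδu : inDelta S (F k) (F (k+1)) := by
          rcases hbdu with hγ | hδ
          · exfalso
            obtain ⟨β, hβ⟩ := ltPlus_delta_image hpq
            exact min_gamma_pure hS hγ hNBF β hβ
          · exact hδ
        have hγv : inGammaS S (G k) (G (k+1)) := by
          rcases hbdv with hγ | hδ
          · exact hγ
          · exfalso
            obtain ⟨β, hβ⟩ := ltPlus_gamma_image hpq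
            exact max_delta_pure hS hδ hNAG β hβ
        have hngu : ∀ w, ¬ inGammaS S (F (k+1)) w :=
          fun w hw => mid_min_delta hS hδu hNBF hw
        have hngv : ∀ w, ¬ inGammaS S (G (k+1)) w :=
          fun w hw => mid_max_gamma hS hγv hNAG hw
        refine kill_gg hS (by omega) hgp hgq hpq ?_ hδu hNBF hγv hngu hngv hne2
        intro z hgz h1 h2
        exact hnb2 z (Or.inl hgz) hs ⟨Or.inr (Or.inr ⟨hgq, hgz, h2⟩),
          Or.inr (Or.inr ⟨hgz, hgp, h1⟩)⟩ }

end Ctx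
end Dev12

section Dev13
variable {S : PHg}
namespace Ctx
variable {n : ℕ} {t : S.FaceS} {F G : ℕ → S.FaceS} {k : ℕ}

lemma tauF (hc : Ctx S n t F G k) (hk2 : k + 2 ≤ n) : sgnSeg S 0 F (k+1) = 1 := by
  have hS := hc.hS
  have hk1n : k + 1 < n := by omega
  have hdFk : (F k).1 = k := hc.hF.1 k (by omega) (by omega)
  have hdGk : (G k).1 = k := hc.hG.1 k (by omega) (by omega)
  have hbdu : inBoundary S (F k) (F (k+1)) := hc.hF.2 k (by omega) (by omega)
  have hnoF : ∀ y, inBoundary S (F k) y →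
      (sgnSeg S 0 F k = 1 → ¬ pencilLt S (F k) (F (k+1)) y) ∧
      (sgnSeg S 0 F k = -1 → ¬ pencilLt S (F k) y (F (k+1))) := by
    intro y hy
    have h := hc.noF (m0 := k+1) (by omega) hk1n (y := y) (by simpa using hy)
    simpa using h
  have htau := sgnSeg_succ F k
  rcases hc.hcase with ⟨hk0, hl⟩ | ⟨hkp, hs, hp⟩ | ⟨hkp, hs, hp⟩
  · -- k = 0
    subst hk0
    have hσF : sgnSeg S 0 F 0 = 1 := rfl
    have hNAF : ∀ z, inBoundary S (F 0) z → ¬ pencilLt S (F 0) (F 1) z :=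
      fun z hz => (hnoF z hz).1 hσF
    have hγu : inGammaS S (F 0) (F 1) := by
      rcases hbdu with hγ | hδ
      · exact hγ
      · exfalso
        obtain ⟨β, hβ⟩ := ltPlus_gamma_image hl
        exact max_delta_pure hS hδ hNAF β hβ
    rw [htau, if_neg (fun hd => not_inGammaS_and_inDelta hS hγu hd)]
    exact hσF
  all_goals {
    have hGx : G (k-1) = F (k-1) := (hc.hagr (k-1) (by omega)).symm
    have hsFat := sgnSeg_at F hkp
    first
    | -- s = 1
      rcases hp with ⟨hgq, hdp⟩ | ⟨hdp, hdq, hpq⟩ | ⟨hgp, hgq, hqp⟩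
      · -- (1a)
        have hσF : sgnSeg S 0 F k = -1 := by rw [hsFat, if_pos hdp, hs]
        have hNBF : ∀ z, inBoundary S (F k) z → ¬ pencilLt S (F k) z (F (k+1)) :=
          fun z hz => (hnoF z hz).2 hσF
        have hδu : inDelta S (F k) (F (k+1)) := by
          rcases hbdu with hγ | hδ
          · exfalso
            have hnd : nonDelta S (F k) := min_gamma_pure hS hγ hNBF
            have hpc : F k = cface S n t k :=
              eq_of_nonDelta hS (by rw [hdFk, cface_dim hc.ht (by omega)]) hnd
                (cm_main hS hc.hn hc.ht k (by omega)).1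
            rcases (cm_main hS hc.hn hc.ht k (by omega)).2 (G k) hdGk with he | hlt
            · exact hc.hne (hpc.trans he.symm)
            · rw [← hpc] at hlt
              refine hS.disj (G k) (F k) (by omega)
                ⟨Or.inl (Relation.TransGen.single ⟨by omega, ?_⟩), Or.inl hlt⟩
              rw [hgq.2]; exact hdp
          · exact hδ
        rw [htau, if_pos hδu, hσF]; norm_num
      · -- (1b)
        have hσF : sgnSeg S 0 F k = -1 := by rw [hsFat, if_pos hdp, hs]
        have hNBF : ∀ z, inBoundary S (F k) z → ¬ pencilLt S (F k) z (F (k+1)) :=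
          fun z hz => (hnoF z hz).2 hσF
        have hδu : inDelta S (F k) (F (k+1)) := by
          rcases hbdu with hγ | hδ
          · exfalso
            obtain ⟨β, hβ⟩ := ltPlus_delta_image hpq
            exact min_gamma_pure hS hγ hNBF β hβ
          · exact hδ
        rw [htau, if_pos hδu, hσF]; norm_num
      · -- (1c)
        have hσF : sgnSeg S 0 F k = 1 := by
          rw [hsFat, if_neg (fun hd => not_inGammaS_and_inDelta hS hgp hd), hs]
        have hNAF : ∀ z, inBoundary S (F k) z → ¬ pencilLt S (F k) (F (k+1)) z :=
          fun z hz => (hnoF z hz).1 hσF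
        have hγu : inGammaS S (F k) (F (k+1)) := by
          rcases hbdu with hγ | hδ
          · exact hγ
          · exfalso
            obtain ⟨β, hβ⟩ := ltPlus_gamma_image hqp
            exact max_delta_pure hS hδ hNAF β hβ
        rw [htau, if_neg (fun hd => not_inGammaS_and_inDelta hS hγu hd), hσF]
    | -- s = -1
      rcases hp with ⟨hgp, hdq⟩ | ⟨hdq, hdp, hqp⟩ | ⟨hgq, hgp, hpq⟩
      · -- (2a)
        have hσF : sgnSeg S 0 F k = -1 := by
          rw [hsFat, if_neg (fun hd => not_inGammaS_and_inDelta hS hgp hd), hs]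
        have hNBF : ∀ z, inBoundary S (F k) z → ¬ pencilLt S (F k) z (F (k+1)) :=
          fun z hz => (hnoF z hz).2 hσF
        have hδu : inDelta S (F k) (F (k+1)) := by
          rcases hbdu with hγ | hδ
          · exfalso
            have hnd : nonDelta S (F k) := min_gamma_pure hS hγ hNBF
            have hpc : F k = cface S n t k :=
              eq_of_nonDelta hS (by rw [hdFk, cface_dim hc.ht (by omega)]) hnd
                (cm_main hS hc.hn hc.ht k (by omega)).1
            rcases (cm_main hS hc.hn hc.ht k (by omega)).2 (G k) hdGk with he | hlt
            · exact hc.hne (hpc.trans he.symm)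
            · rw [← hpc] at hlt
              refine hS.disj (F k) (G k) (by omega)
                ⟨Or.inl (Relation.TransGen.single ⟨by omega, ?_⟩), Or.inr hlt⟩
              rw [hgp.2]; exact hdq
          · exact hδ
        rw [htau, if_pos hδu, hσF]; norm_num
      · -- (2b)
        have hσF : sgnSeg S 0 F k = 1 := by rw [hsFat, if_pos hdp, hs]; norm_num
        have hNAF : ∀ z, inBoundary S (F k) z → ¬ pencilLt S (F k) (F (k+1)) z :=
          fun z hz => (hnoF z hz).1 hσF
        have hγu : inGammaS S (F k) (F (k+1)) := by
          rcases hbdu with hγ | hδ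
          · exact hγ
          · exfalso
            obtain ⟨β, hβ⟩ := ltPlus_gamma_image hqp
            exact max_delta_pure hS hδ hNAF β hβ
        rw [htau, if_neg (fun hd => not_inGammaS_and_inDelta hS hγu hd), hσF]
      · -- (2c)
        have hσF : sgnSeg S 0 F k = -1 := by
          rw [hsFat, if_neg (fun hd => not_inGammaS_and_inDelta hS hgp hd), hs]
        have hNBF : ∀ z, inBoundary S (F k) z → ¬ pencilLt S (F k) z (F (k+1)) :=
          fun z hz => (hnoF z hz).2 hσF
        have hδu : inDelta S (F k) (F (k+1)) := by
          rcases hbdu with hγ | hδ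
          · exfalso
            obtain ⟨β, hβ⟩ := ltPlus_delta_image hpq
            exact min_gamma_pure hS hγ hNBF β hβ
          · exact hδ
        rw [htau, if_pos hδu, hσF]; norm_num }

lemma lowdelta (hc : Ctx S n t F G k) (hk2 : k + 2 ≤ n) :
    inDelta S (F (k+1)) (F (k+2)) := by
  have h1 := hc.tauF hk2
  have h2 := hc.sgnF_range (j := k+2) le_rfl hk2
  have h3 : sgnSeg S 0 F (k+2) = if inDelta S (F (k+1)) (F (k+2))
      then -(sgnSeg S 0 F (k+1)) else sgnSeg S 0 F (k+1) := sgnSeg_succ F (k+1)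
  by_contra hd
  rw [if_neg hd, h1] at h3
  omega

end Ctx
end Dev13

/-- Two consecutive maximal flags differ at exactly one level;
their intersection is a high p-flag if the first flag is positive and a low
p-flag if the first flag is negative. -/
theorem consecutive_flags_intersection
    (S : PHg) (hS : IsOpetope S) (n : ℕ) (hn : hasDim S n)
    (t : S.FaceS) (ht : t.1 = n)
    (F G : ℕ → S.FaceS)
    (hF : IsRFlag S n 0 F) (hFt : F n = t)
    (hG : IsRFlag S n 0 G) (hGt : G n = t)
    (hlt : flagLt S 0 n F G)
    (hsucc : ∀ H, IsRFlag S n 0 H → H n = t → flagLt S 0 n F H →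
      (EqOnFl 0 n G H ∨ flagLt S 0 n G H)) :
    ∃ k, k ≤ n ∧ F k ≠ G k ∧ (∀ j, j ≤ n → j ≠ k → F j = G j) ∧
      (sgnSeg S 0 F n = 1 → k + 1 = n) ∧
      (sgnSeg S 0 F n = -1 → LowLevelT S n F k) := by
  obtain ⟨k, hk0, hkn, hagr, hne, hcase⟩ := hlt
  have hc : Ctx S n t F G k :=
    ⟨hS, hn, ht, hF, hFt, hG, hGt, hkn, fun i hi => hagr i (by omega) hi, hne, hcase, hsucc⟩
  refine ⟨k, hkn, hne, ?_, ?_, ?_⟩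
  · intro j hj hjk
    rcases lt_trichotomy j k with h | h | h
    · exact hc.hagr j h
    · exact absurd h hjk
    · rcases Nat.lt_or_ge j (k+2) with h2 | h2
      · have hj1 : j = k+1 := by omega
        rw [hj1]
        exact hc.gap
      · exact hc.eq_above j h2 hj
  · intro hsgn
    by_contra hne3
    have hk1n : k+1 < n := by
      have := hc.knen
      omega
    have := hc.sgnF_range (j := n) (by omega) le_rfl
    omega
  · intro hsgn
    have hk2n : k + 2 ≤ n := by
      have hkn' := hc.knen
      rcases Nat.lt_or_ge (k+1) n with h | h
      · omega
      · exfalso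
        have he : k+1 = n := by omega
        have := hc.sgn_top he
        omega
    refine ⟨hk2n, hc.lowdelta hk2n, ?_⟩
    intro j hj hj2 hd
    have hg := hc.gammaStepF (m := j+1) (by omega) (by omega)
    have hdim : 0 < (F (j+2)).1 := by
      rw [hc.hF.1 (j+2) (by omega) (by omega)]
      omega
    exact not_inGammaS_and_inDelta hc.hS ⟨hdim, hg.symm⟩ hd
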